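/- arXiv:2402.00301 — 3 statements merged into one kernel-verified Lean document; each statement's English description precedes it below -/
import Mathlib

section
/- A projectivity preserves harmonic conjugates: Let A and B be distinct points, let C be a point on the line AB, and let π be a projectivity from the range of AB to the range of a line m. Then π(h(A,B;C)) = h(π(A), π(B); π(C)). -/
open Configuration

universe u
variable (P L : Type u) [Membership P L]

/-- Three points are collinear if some line passes through all three. -/
def Col (A B C : P) : Prop := ∃ l : L, A ∈ l ∧ B ∈ l ∧ C ∈ l

/-- Every line of `L` is incident with at least `n` distinct points. -/
def LinesHaveAtLeast (n : ℕ) : Prop :=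
  ∀ l : L, ∃ s : Finset P, n ≤ s.card ∧ ∀ X ∈ s, X ∈ l
/-- `IsTriangle A B C ab bc ca` : the points `A B C` form a triangle with sides
`ab = AB`, `bc = BC`, `ca = CA`; noncollinearity is expressed by each vertex
lying outside the opposite side. -/
def IsTriangle (A B C : P) (ab bc ca : L) : Prop :=
  A ∈ ab ∧ B ∈ ab ∧ B ∈ bc ∧ C ∈ bc ∧ C ∈ ca ∧ A ∈ ca ∧ A ∉ bc ∧ B ∉ ca ∧ C ∉ ab

/-- Two triangles are distinct if corresponding vertices are distinct and
corresponding sides are distinct. -/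
def DistinctTriangles (A B C A' B' C' : P) (ab bc ca ab' bc' ca' : L) : Prop :=
  A ≠ A' ∧ B ≠ B' ∧ C ≠ C' ∧ ab ≠ ab' ∧ bc ≠ bc' ∧ ca ≠ ca'

/-- Two triangles are perspective from the center `O` : the lines joining
corresponding vertices are concurrent at `O`, and `O` lies outside each of the
six sides. -/
def PerspectiveFromCenter (A B C A' B' C' : P) (ab bc ca ab' bc' ca' : L) (O : P) : Prop :=
  (∃ la : L, A ∈ la ∧ A' ∈ la ∧ O ∈ la) ∧
  (∃ lb : L, B ∈ lb ∧ B' ∈ lb ∧ O ∈ lb) ∧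
  (∃ lc : L, C ∈ lc ∧ C' ∈ lc ∧ O ∈ lc) ∧
  O ∉ ab ∧ O ∉ bc ∧ O ∉ ca ∧ O ∉ ab' ∧ O ∉ bc' ∧ O ∉ ca'

/-- Two triangles are perspective from the axis `l` : the intersection points of
corresponding sides lie on `l`, and `l` avoids each of the six vertices. -/
def PerspectiveFromAxis (A B C A' B' C' : P) (ab bc ca ab' bc' ca' : L) (l : L) : Prop :=
  (∃ X : P, X ∈ ab ∧ X ∈ ab' ∧ X ∈ l) ∧
  (∃ Y : P, Y ∈ bc ∧ Y ∈ bc' ∧ Y ∈ l) ∧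
  (∃ Z : P, Z ∈ ca ∧ Z ∈ ca' ∧ Z ∈ l) ∧
  A ∉ l ∧ B ∉ l ∧ C ∉ l ∧ A' ∉ l ∧ B' ∉ l ∧ C' ∉ l

/-- Desargues's property: two distinct triangles that are perspective from a
center are perspective from an axis. -/
def DesarguesProperty : Prop :=
  ∀ (A B C A' B' C' : P) (ab bc ca ab' bc' ca' : L) (O : P),
    IsTriangle P L A B C ab bc ca → IsTriangle P L A' B' C' ab' bc' ca' →
    DistinctTriangles P L A B C A' B' C' ab bc ca ab' bc' ca' →
    PerspectiveFromCenter P L A B C A' B' C' ab bc ca ab' bc' ca' O →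
    ∃ l : L, PerspectiveFromAxis P L A B C A' B' C' ab bc ca ab' bc' ca' l

/-- `D` is the harmonic conjugate `h(A,B;C)` of `C` with respect to the distinct
points `A`, `B` : choosing a line `l` through `C` with `l ≠ AB` and a point `R`
outside both `AB` and `l`, and setting `Pp = BR·l`, `Q = AR·l`, `S = AP·BQ`,
the point `D` is `AB·RS`.  (By the invariance theorem this is independent of
the choices of `l` and `R`.) -/
def IsHarmonic (A B C D : P) : Prop :=
  A ≠ B ∧ ∃ (ab l : L) (R Pp Q S : P),
    A ∈ ab ∧ B ∈ ab ∧ C ∈ ab ∧ C ∈ l ∧ l ≠ ab ∧ R ∉ ab ∧ R ∉ l ∧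
    Pp ∈ l ∧ Col P L B R Pp ∧ Q ∈ l ∧ Col P L A R Q ∧
    Col P L A Pp S ∧ Col P L B Q S ∧ D ∈ ab ∧ Col P L R S D

/-- The range of a line `l` : the points incident with `l`. -/
abbrev Rng (l : L) : Type _ := {X : P // X ∈ l}

/-- `f` is the perspectivity from the range of `l` to the range of `m` with
center `O`, a point outside both `l` and `m` : each point `X` of `l` is mapped
to the point `(OX)·m`, i.e. `O`, `X` and `f X` are collinear. -/
def IsPerspectivity (l m : L) (f : Rng P L l → Rng P L m) : Prop :=
  ∃ O : P, O ∉ l ∧ O ∉ m ∧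
    ∀ X : Rng P L l, ∃ k : L, O ∈ k ∧ (X : P) ∈ k ∧ ((f X : P)) ∈ k

/-- A projectivity between ranges of lines : a composite of finitely many
perspectivities. -/
inductive IsProjectivity : (l m : L) → (Rng P L l → Rng P L m) → Prop where
  | persp {l m : L} {f : Rng P L l → Rng P L m} :
      IsPerspectivity P L l m f → IsProjectivity l m f
  | comp {l m n : L} {f : Rng P L l → Rng P L m} {g : Rng P L m → Rng P L n} :
      IsProjectivity l m f → IsProjectivity m n g → IsProjectivity l n (g ∘ f)


set_option linter.unusedSectionVars false

namespace ProjHarm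
open Configuration Configuration.HasLines Configuration.HasPoints

variable {P L : Type u} [Membership P L] [ProjectivePlane P L]

/-- Uniqueness of the line through two distinct points. -/
theorem uniqL {A B : P} {l m : L} (hAB : A ≠ B) (h1 : A ∈ l) (h2 : B ∈ l) (h3 : A ∈ m)
    (h4 : B ∈ m) : l = m := (Nondegenerate.eq_or_eq h1 h2 h3 h4).resolve_left hAB

/-- Uniqueness of the point on two distinct lines. -/
theorem uniqP {A B : P} {l m : L} (hlm : l ≠ m) (h1 : A ∈ l) (h2 : A ∈ m) (h3 : B ∈ l)
    (h4 : B ∈ m) : A = B := (Nondegenerate.eq_or_eq h1 h3 h2 h4).resolve_right hlm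

theorem memE {X : P} {l m : L} (h : l = m) (hx : X ∈ l) : X ∈ m := by rw [← h]; exact hx

theorem memEP {X Y : P} {l : L} (h : X = Y) (hx : X ∈ l) : Y ∈ l := by rw [← h]; exact hx

/-- A normalized harmonic-quadrangle configuration for `A B C` on the line `ab`
(with `C` distinct from `A` and `B`), producing the point `D`. -/
structure Cfg (A B C : P) (ab : L) (D : P) : Type u where
  hAB : A ≠ B
  hCA : C ≠ A
  hCB : C ≠ B
  hAab : A ∈ ab
  hBab : B ∈ ab
  hCab : C ∈ ab
  l : L
  R : P
  Pp : P
  Q : P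
  S : P
  lBR : L
  lAR : L
  lAP : L
  lBQ : L
  lRS : L
  hCl : C ∈ l
  hlab : l ≠ ab
  hRab : R ∉ ab
  hRl : R ∉ l
  hPl : Pp ∈ l
  hQl : Q ∈ l
  hB1 : B ∈ lBR
  hR1 : R ∈ lBR
  hP1 : Pp ∈ lBR
  hA2 : A ∈ lAR
  hR2 : R ∈ lAR
  hQ2 : Q ∈ lAR
  hA3 : A ∈ lAP
  hP3 : Pp ∈ lAP
  hS3 : S ∈ lAP
  hB4 : B ∈ lBQ
  hQ4 : Q ∈ lBQ
  hS4 : S ∈ lBQ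
  hR5 : R ∈ lRS
  hS5 : S ∈ lRS
  hD5 : D ∈ lRS
  hDab : D ∈ ab

namespace Cfg

variable {A B C D : P} {ab : L} (K : Cfg A B C ab D)

theorem A_nl : A ∉ K.l := fun h => K.hlab (uniqL (Ne.symm K.hCA) h K.hCl K.hAab K.hCab)
theorem B_nl : B ∉ K.l := fun h => K.hlab (uniqL (Ne.symm K.hCB) h K.hCl K.hBab K.hCab)
theorem R_ne_A : K.R ≠ A := fun h => K.hRab (memEP h.symm K.hAab)
theorem R_ne_B : K.R ≠ B := fun h => K.hRab (memEP h.symm K.hBab)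
theorem lBR_ne_l : K.lBR ≠ K.l := fun h => K.hRl (memE h K.hR1)
theorem lAR_ne_l : K.lAR ≠ K.l := fun h => K.hRl (memE h K.hR2)
theorem lBR_ne_ab : K.lBR ≠ ab := fun h => K.hRab (memE h K.hR1)
theorem lAR_ne_ab : K.lAR ≠ ab := fun h => K.hRab (memE h K.hR2)
theorem lRS_ne_ab : K.lRS ≠ ab := fun h => K.hRab (memE h K.hR5)
theorem A_not_lBR : A ∉ K.lBR := fun h => K.lBR_ne_ab (uniqL K.hAB h K.hB1 K.hAab K.hBab)
theorem B_not_lAR : B ∉ K.lAR := fun h => K.lAR_ne_ab (uniqL K.hAB K.hA2 h K.hAab K.hBab)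
theorem C_not_lBR : C ∉ K.lBR := fun h => K.lBR_ne_ab (uniqL (Ne.symm K.hCB) K.hB1 h K.hBab K.hCab)
theorem C_not_lAR : C ∉ K.lAR := fun h => K.lAR_ne_ab (uniqL (Ne.symm K.hCA) K.hA2 h K.hAab K.hCab)
theorem Pp_ne_C : K.Pp ≠ C := fun h => K.C_not_lBR (memEP h K.hP1)
theorem Q_ne_C : K.Q ≠ C := fun h => K.C_not_lAR (memEP h K.hQ2)
theorem Pp_not_ab : K.Pp ∉ ab := fun h => K.Pp_ne_C (uniqP K.hlab K.hPl h K.hCl K.hCab)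
theorem Q_not_ab : K.Q ∉ ab := fun h => K.Q_ne_C (uniqP K.hlab K.hQl h K.hCl K.hCab)
theorem Pp_ne_A : K.Pp ≠ A := fun h => K.A_nl (memEP h K.hPl)
theorem Pp_ne_B : K.Pp ≠ B := fun h => K.B_nl (memEP h K.hPl)
theorem Q_ne_A : K.Q ≠ A := fun h => K.A_nl (memEP h K.hQl)
theorem Q_ne_B : K.Q ≠ B := fun h => K.B_nl (memEP h K.hQl)
theorem Pp_ne_R : K.Pp ≠ K.R := fun h => K.hRl (memEP h K.hPl)
theorem Q_ne_R : K.Q ≠ K.R := fun h => K.hRl (memEP h K.hQl)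
theorem lBR_ne_lAR : K.lBR ≠ K.lAR := fun h => K.A_not_lBR (memE h.symm K.hA2)
theorem Pp_ne_Q : K.Pp ≠ K.Q := fun h =>
  K.Pp_ne_R (uniqP K.lBR_ne_lAR K.hP1 (memEP h.symm K.hQ2) K.hR1 K.hR2)
theorem lAP_ne_ab : K.lAP ≠ ab := fun h => K.Pp_not_ab (memE h K.hP3)
theorem lBQ_ne_ab : K.lBQ ≠ ab := fun h => K.Q_not_ab (memE h K.hQ4)
theorem lAP_ne_lBQ : K.lAP ≠ K.lBQ := fun h =>
  K.lAP_ne_ab (uniqL K.hAB K.hA3 (memE h.symm K.hB4) K.hAab K.hBab)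
theorem lAP_ne_l : K.lAP ≠ K.l := fun h => K.A_nl (memE h K.hA3)
theorem lBQ_ne_l : K.lBQ ≠ K.l := fun h => K.B_nl (memE h K.hB4)
theorem S_ne_A : K.S ≠ A := fun h =>
  K.lBQ_ne_ab (uniqL K.hAB (memEP h K.hS4) K.hB4 K.hAab K.hBab)
theorem S_ne_B : K.S ≠ B := fun h =>
  K.lAP_ne_ab (uniqL K.hAB K.hA3 (memEP h K.hS3) K.hAab K.hBab)
theorem S_not_ab : K.S ∉ ab := fun h => K.S_ne_A (uniqP K.lAP_ne_ab K.hS3 h K.hA3 K.hAab)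
theorem S_ne_C : K.S ≠ C := fun h => K.S_not_ab (memEP h.symm K.hCab)
theorem R_not_lBQ : K.R ∉ K.lBQ := fun h => by
  have h1 : K.lBQ = K.lBR := uniqL (Ne.symm K.R_ne_B) K.hB4 h K.hB1 K.hR1
  exact K.Pp_ne_Q (uniqP K.lBR_ne_l (memE h1 K.hQ4) K.hQl K.hP1 K.hPl).symm
theorem R_not_lAP : K.R ∉ K.lAP := fun h => by
  have h1 : K.lAP = K.lAR := uniqL (Ne.symm K.R_ne_A) K.hA3 h K.hA2 K.hR2
  exact K.Pp_ne_Q (uniqP K.lAR_ne_l (memE h1 K.hP3) K.hPl K.hQ2 K.hQl)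
theorem S_ne_R : K.S ≠ K.R := fun h => K.R_not_lBQ (memEP h K.hS4)
theorem A_not_lRS : A ∉ K.lRS := fun h =>
  K.R_not_lAP (memE (uniqL (Ne.symm K.S_ne_A) h K.hS5 K.hA3 K.hS3) K.hR5)
theorem B_not_lRS : B ∉ K.lRS := fun h =>
  K.R_not_lBQ (memE (uniqL (Ne.symm K.S_ne_B) h K.hS5 K.hB4 K.hS4) K.hR5)
include K in
theorem D_ne_A : D ≠ A := fun h => A_not_lRS K (memEP h K.hD5)
include K in
theorem D_ne_B : D ≠ B := fun h => B_not_lRS K (memEP h K.hD5)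
theorem S_not_lAR : K.S ∉ K.lAR := fun h =>
  K.R_not_lAP (memE (uniqL (Ne.symm K.S_ne_A) K.hA2 h K.hA3 K.hS3) K.hR2)
theorem Q_not_lRS : K.Q ∉ K.lRS := fun h =>
  K.S_not_lAR (memE (uniqL (Ne.symm K.Q_ne_R) K.hR5 h K.hR2 K.hQ2) K.hS5)
theorem Q_not_lBR : K.Q ∉ K.lBR := fun h =>
  K.Pp_ne_Q (uniqP K.lBR_ne_l K.hP1 K.hPl h K.hQl)
theorem Pp_not_lAR : K.Pp ∉ K.lAR := fun h =>
  K.Pp_ne_Q (uniqP K.lAR_ne_l h K.hPl K.hQ2 K.hQl)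
theorem C_not_lAP : C ∉ K.lAP := fun h =>
  K.lAP_ne_ab (uniqL (Ne.symm K.hCA) K.hA3 h K.hAab K.hCab)
theorem C_not_lBQ : C ∉ K.lBQ := fun h =>
  K.lBQ_ne_ab (uniqL (Ne.symm K.hCB) K.hB4 h K.hBab K.hCab)
theorem S_ne_Pp : K.S ≠ K.Pp := fun h => by
  have h1 : K.lBQ = K.lBR := uniqL (Ne.symm K.Pp_ne_B) K.hB4 (memEP h K.hS4) K.hB1 K.hP1
  exact K.R_not_lBQ (memE h1.symm K.hR1)
theorem S_ne_Q : K.S ≠ K.Q := fun h => by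
  have h1 : K.lAP = K.lAR := uniqL (Ne.symm K.Q_ne_A) K.hA3 (memEP h K.hS3) K.hA2 K.hQ2
  exact K.R_not_lAP (memE h1.symm K.hR2)

end Cfg
end ProjHarm

namespace ProjHarm
variable {P L : Type u} [Membership P L] [ProjectivePlane P L]
open Configuration Configuration.HasLines Configuration.HasPoints

theorem avoid_pts_aux (g : L) :
    ∀ T : List L, (∀ t ∈ T, t ≠ g) → ∀ s : Finset P, (∀ X ∈ s, X ∈ g) →
      T.length < s.card → ∃ X ∈ s, ∀ t ∈ T, X ∉ t := by
  intro T
  induction T with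
  | nil =>
    intro _ s _ hc
    obtain ⟨X, hX⟩ := Finset.card_pos.mp hc
    exact ⟨X, hX, by simp⟩
  | cons t T ih =>
    intro hgT s hsg hc
    classical
    have hne : g ≠ t := (hgT t List.mem_cons_self).symm
    have hle : (s.filter (fun X => X ∈ t)).card ≤ 1 := by
      refine Finset.card_le_one.mpr ?_
      intro a ha b hb
      simp only [Finset.mem_filter] at ha hb
      exact uniqP hne (hsg a ha.1) ha.2 (hsg b hb.1) hb.2
    have hsplit := Finset.card_filter_add_card_filter_not
      (s := s) (p := fun X => X ∈ t)
    have hc' : T.length < (s.filter (fun X => ¬ X ∈ t)).card := by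
      simp only [List.length_cons] at hc; omega
    obtain ⟨X, hXs, hXT⟩ := ih (fun u hu => hgT u (List.mem_cons_of_mem _ hu))
      (s.filter (fun X => ¬ X ∈ t)) (fun X hX => hsg X (Finset.mem_filter.mp hX).1) hc'
    refine ⟨X, (Finset.mem_filter.mp hXs).1, ?_⟩
    intro u hu
    rcases List.mem_cons.mp hu with h | h
    · exact h ▸ (Finset.mem_filter.mp hXs).2
    · exact hXT u h

/-- On any line one can find a point avoiding at most seven other lines. -/
theorem avoid_pts (h8 : LinesHaveAtLeast P L 8) (g : L) (T : List L)
    (hg : ∀ t ∈ T, t ≠ g) (hT : T.length < 8) :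
    ∃ X : P, X ∈ g ∧ ∀ t ∈ T, X ∉ t := by
  obtain ⟨s, hs8, hsg⟩ := h8 g
  obtain ⟨X, hXs, h⟩ := avoid_pts_aux g T hg s hsg (lt_of_lt_of_le hT hs8)
  exact ⟨X, hsg X hXs, h⟩

/-- Through any point there pass at least eight lines. -/
theorem lines_through (h8 : LinesHaveAtLeast P L 8) (X : P) :
    ∃ s : Finset L, 8 ≤ s.card ∧ ∀ g ∈ s, X ∈ g := by
  classical
  obtain ⟨m, hm⟩ := Nondegenerate.exists_line (P := P) (L := L) X
  obtain ⟨s, hs8, hsm⟩ := h8 m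
  have hXY : ∀ Y ∈ s, X ≠ Y := fun Y hY h => hm (memEP h.symm (hsm Y hY))
  refine ⟨s.image (fun Y => if h : X = Y then m else mkLine h), ?_, ?_⟩
  · rw [Finset.card_image_of_injOn]
    · exact hs8
    · intro Y1 h1 Y2 h2 he
      replace h1 : Y1 ∈ s := h1
      replace h2 : Y2 ∈ s := h2
      simp only [dif_neg (hXY Y1 h1), dif_neg (hXY Y2 h2)] at he
      have hX1 : X ∈ (mkLine (hXY Y1 h1) : L) := (mkLine_ax _).1
      have hne : (mkLine (hXY Y1 h1) : L) ≠ m := fun h => hm (memE h hX1)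
      exact uniqP hne ((mkLine_ax _).2) (hsm Y1 h1)
        (memE he.symm ((mkLine_ax (hXY Y2 h2)).2)) (hsm Y2 h2)
  · intro g hg
    obtain ⟨Y, hY, he⟩ := Finset.mem_image.mp hg
    rw [dif_neg (hXY Y hY)] at he
    exact memE he ((mkLine_ax _).1)

/-- Through any point one can find a line avoiding at most seven other lines. -/
theorem avoid_lines (h8 : LinesHaveAtLeast P L 8) (X : P) (T : List L) (hT : T.length < 8) :
    ∃ g : L, X ∈ g ∧ ∀ t ∈ T, g ≠ t := by
  classical
  obtain ⟨s, hs8, hsX⟩ := lines_through h8 X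
  have : ∃ g ∈ s, g ∉ T := by
    by_contra h
    push_neg at h
    have hsub : s ⊆ T.toFinset := fun g hg => List.mem_toFinset.mpr (h g hg)
    have h1 := Finset.card_le_card hsub
    have h2 := T.toFinset_card_le
    omega
  obtain ⟨g, hgs, hgT⟩ := this
  exact ⟨g, hsX g hgs, fun t ht he => hgT (he ▸ ht)⟩

/-- Completion of a choice of auxiliary line and point to a full configuration. -/
theorem exists_cfg {A B C : P} {ab : L} (hAB : A ≠ B) (hCA : C ≠ A) (hCB : C ≠ B)
    (hA : A ∈ ab) (hB : B ∈ ab) (hC : C ∈ ab) (l : L) (hCl : C ∈ l) (hlab : l ≠ ab)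
    (R : P) (hRab : R ∉ ab) (hRl : R ∉ l) :
    ∃ (D : P) (K : Cfg A B C ab D), K.l = l ∧ K.R = R := by
  have hA_nl : A ∉ l := fun h => hlab (uniqL (Ne.symm hCA) h hCl hA hC)
  have hB_nl : B ∉ l := fun h => hlab (uniqL (Ne.symm hCB) h hCl hB hC)
  have hBR : B ≠ R := fun h => hRab (memEP h hB)
  have hAR : A ≠ R := fun h => hRab (memEP h hA)
  set lBR : L := mkLine hBR with hlBR
  have hB1 : B ∈ lBR := (mkLine_ax hBR).1
  have hR1 : R ∈ lBR := (mkLine_ax hBR).2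
  set lAR : L := mkLine hAR with hlAR
  have hA2 : A ∈ lAR := (mkLine_ax hAR).1
  have hR2 : R ∈ lAR := (mkLine_ax hAR).2
  have hlBRl : lBR ≠ l := fun h => hRl (memE h hR1)
  have hlARl : lAR ≠ l := fun h => hRl (memE h hR2)
  have hlBRab : lBR ≠ ab := fun h => hRab (memE h hR1)
  have hlARab : lAR ≠ ab := fun h => hRab (memE h hR2)
  set Pp : P := mkPoint hlBRl with hPp
  have hP1 : Pp ∈ lBR := (mkPoint_ax hlBRl).1
  have hPl : Pp ∈ l := (mkPoint_ax hlBRl).2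
  set Q : P := mkPoint hlARl with hQ
  have hQ2 : Q ∈ lAR := (mkPoint_ax hlARl).1
  have hQl : Q ∈ l := (mkPoint_ax hlARl).2
  have hPA : Pp ≠ A := fun h => hRab (memE (uniqL hAB (memEP h hP1) hB1 hA hB) hR1)
  have hQB : Q ≠ B := fun h => hB_nl (memEP h hQl)
  have hPnab : Pp ∉ ab := by
    intro h
    have hPC : Pp = C := uniqP hlab hPl h hCl hC
    exact hlBRab (uniqL (Ne.symm hCB) hB1 (memEP hPC hP1) hB hC)
  have hQnab : Q ∉ ab := by
    intro h
    have hQC : Q = C := uniqP hlab hQl h hCl hC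
    exact hlARab (uniqL (Ne.symm hCA) hA2 (memEP hQC hQ2) hA hC)
  set lAP : L := mkLine (Ne.symm hPA) with hlAP
  have hA3 : A ∈ lAP := (mkLine_ax (Ne.symm hPA)).1
  have hP3 : Pp ∈ lAP := (mkLine_ax (Ne.symm hPA)).2
  set lBQ : L := mkLine (Ne.symm hQB) with hlBQ
  have hB4 : B ∈ lBQ := (mkLine_ax (Ne.symm hQB)).1
  have hQ4 : Q ∈ lBQ := (mkLine_ax (Ne.symm hQB)).2
  have hlAPab : lAP ≠ ab := fun h => hPnab (memE h hP3)
  have hlBQab : lBQ ≠ ab := fun h => hQnab (memE h hQ4)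
  have hlAPlBQ : lAP ≠ lBQ := fun h => hlAPab (uniqL hAB hA3 (memE h.symm hB4) hA hB)
  set S : P := mkPoint hlAPlBQ with hS
  have hS3 : S ∈ lAP := (mkPoint_ax hlAPlBQ).1
  have hS4 : S ∈ lBQ := (mkPoint_ax hlAPlBQ).2
  have hlBRlAR : lBR ≠ lAR := fun h => hlBRab (uniqL hAB (memE h.symm hA2) hB1 hA hB)
  have hPQ : Pp ≠ Q := fun h =>
    hRl (memEP (uniqP hlBRlAR hP1 (memEP h.symm hQ2) hR1 hR2) hPl)
  have hRS : R ≠ S := by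
    intro h
    have hRlBQ : R ∈ lBQ := memEP h.symm hS4
    have h1 : lBQ = lBR := uniqL hBR hB4 hRlBQ hB1 hR1
    exact hPQ (uniqP hlBRl (memE h1 hQ4) hQl hP1 hPl).symm
  set lRS : L := mkLine hRS with hlRS
  have hR5 : R ∈ lRS := (mkLine_ax hRS).1
  have hS5 : S ∈ lRS := (mkLine_ax hRS).2
  have hlRSab : lRS ≠ ab := fun h => hRab (memE h hR5)
  refine ⟨mkPoint hlRSab, ⟨hAB, hCA, hCB, hA, hB, hC, l, R, Pp, Q, S, lBR, lAR, lAP, lBQ,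
    lRS, hCl, hlab, hRab, hRl, hPl, hQl, hB1, hR1, hP1, hA2, hR2, hQ2, hA3, hP3, hS3,
    hB4, hQ4, hS4, hR5, hS5, (mkPoint_ax hlRSab).1, (mkPoint_ax hlRSab).2⟩, rfl, rfl⟩

/-- Extract a normalized configuration from the harmonic relation. -/
theorem toCfg {A B C D : P} {ab : L} (h : IsHarmonic P L A B C D)
    (hCA : C ≠ A) (hCB : C ≠ B) (hA : A ∈ ab) (hB : B ∈ ab) :
    Nonempty (Cfg A B C ab D) := by
  obtain ⟨hAB, ab0, l, R, Pp, Q, S, hA0, hB0, hC0, hCl, hlab0, hRab0, hRl, hPl, hBRP, hQl,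
    hARQ, hAPS, hBQS, hD0, hRSD⟩ := h
  have e : ab0 = ab := uniqL hAB hA0 hB0 hA hB
  subst e
  obtain ⟨lBR, hB1, hR1, hP1⟩ := hBRP
  obtain ⟨lAR, hA2, hR2, hQ2⟩ := hARQ
  obtain ⟨lAP, hA3, hP3, hS3⟩ := hAPS
  obtain ⟨lBQ, hB4, hQ4, hS4⟩ := hBQS
  obtain ⟨lRS, hR5, hS5, hD5⟩ := hRSD
  exact ⟨⟨hAB, hCA, hCB, hA, hB, hC0, l, R, Pp, Q, S, lBR, lAR, lAP, lBQ, lRS, hCl, hlab0,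
    hRab0, hRl, hPl, hQl, hB1, hR1, hP1, hA2, hR2, hQ2, hA3, hP3, hS3, hB4, hQ4, hS4,
    hR5, hS5, hD5, hD0⟩⟩

/-- A configuration witnesses the harmonic relation. -/
theorem ofCfg {A B C D : P} {ab : L} (K : Cfg A B C ab D) : IsHarmonic P L A B C D :=
  ⟨K.hAB, ab, K.l, K.R, K.Pp, K.Q, K.S, K.hAab, K.hBab, K.hCab, K.hCl, K.hlab, K.hRab,
    K.hRl, K.hPl, ⟨K.lBR, K.hB1, K.hR1, K.hP1⟩, K.hQl, ⟨K.lAR, K.hA2, K.hR2, K.hQ2⟩,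
    ⟨K.lAP, K.hA3, K.hP3, K.hS3⟩, ⟨K.lBQ, K.hB4, K.hQ4, K.hS4⟩, K.hDab,
    ⟨K.lRS, K.hR5, K.hS5, K.hD5⟩⟩

/-- The configuration with the roles of `A` and `B` exchanged. -/
def Cfg.symmAB {A B C D : P} {ab : L} (K : Cfg A B C ab D) : Cfg B A C ab D :=
  ⟨Ne.symm K.hAB, K.hCB, K.hCA, K.hBab, K.hAab, K.hCab, K.l, K.R, K.Q, K.Pp, K.S,
    K.lAR, K.lBR, K.lBQ, K.lAP, K.lRS, K.hCl, K.hlab, K.hRab, K.hRl, K.hQl, K.hPl,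
    K.hA2, K.hR2, K.hQ2, K.hB1, K.hR1, K.hP1, K.hB4, K.hQ4, K.hS4, K.hA3, K.hP3, K.hS3,
    K.hR5, K.hS5, K.hD5, K.hDab⟩

end ProjHarm

namespace ProjHarm
variable {P L : Type u} [Membership P L] [ProjectivePlane P L]
open Configuration Configuration.HasLines Configuration.HasPoints Configuration.Nondegenerate

/-- The core comparison: two configurations for the same `A B C`, the second in
general position relative to the first, give the same fourth harmonic point.
Three applications of Desargues's property. -/
theorem core {A B C Da Db : P} {ab : L} (hdes : DesarguesProperty P L)
    (K : Cfg A B C ab Da) (N : Cfg A B C ab Db)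
    (hll : K.l ≠ N.l)
    (h1 : N.R ∉ K.lBR) (h2 : N.R ∉ K.lAR) (h3 : N.R ∉ K.lRS)
    (h4 : N.Pp ∉ K.lAP) (h5 : N.Q ∉ K.lBQ) : Da = Db := by
  have hPP : K.Pp ≠ N.Pp := fun h => N.Pp_ne_C (uniqP hll (memEP h K.hPl) N.hPl K.hCl N.hCl)
  have hQQ : K.Q ≠ N.Q := fun h => N.Q_ne_C (uniqP hll (memEP h K.hQl) N.hQl K.hCl N.hCl)
  set p1 : L := mkLine hPP with hp1def
  have hPp1 : K.Pp ∈ p1 := (mkLine_ax hPP).1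
  have hPp1' : N.Pp ∈ p1 := (mkLine_ax hPP).2
  set q1 : L := mkLine hQQ with hq1def
  have hQq1 : K.Q ∈ q1 := (mkLine_ax hQQ).1
  have hQq1' : N.Q ∈ q1 := (mkLine_ax hQQ).2
  have hBRBR : K.lBR ≠ N.lBR := fun h => h1 (memE h.symm N.hR1)
  have hARAR : K.lAR ≠ N.lAR := fun h => h2 (memE h.symm N.hR2)
  have hAPAP : K.lAP ≠ N.lAP := fun h => h4 (memE h.symm N.hP3)
  have hBQBQ : K.lBQ ≠ N.lBQ := fun h => h5 (memE h.symm N.hQ4)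
  have c1 : N.Pp ∉ K.lBR := fun h => N.Pp_ne_B (uniqP hBRBR h N.hP1 K.hB1 N.hB1)
  have c2 : K.Pp ∉ N.lBR := fun h => K.Pp_ne_B (uniqP hBRBR K.hP1 h K.hB1 N.hB1)
  have c3 : B ∉ p1 := fun h => c1 (memE (uniqL K.Pp_ne_B hPp1 h K.hP1 K.hB1) hPp1')
  have c4 : N.Q ∉ K.lAR := fun h => N.Q_ne_A (uniqP hARAR h N.hQ2 K.hA2 N.hA2)
  have c5 : K.Q ∉ N.lAR := fun h => K.Q_ne_A (uniqP hARAR K.hQ2 h K.hA2 N.hA2)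
  have c6 : A ∉ q1 := fun h => c4 (memE (uniqL K.Q_ne_A hQq1 h K.hQ2 K.hA2) hQq1')
  have c7 : C ∉ p1 := fun h =>
    N.Pp_ne_C (uniqP hll (memE (uniqL K.Pp_ne_C hPp1 h K.hPl K.hCl) hPp1') N.hPl K.hCl N.hCl)
  have c8 : C ∉ q1 := fun h =>
    N.Q_ne_C (uniqP hll (memE (uniqL K.Q_ne_C hQq1 h K.hQl K.hCl) hQq1') N.hQl K.hCl N.hCl)
  have c9 : p1 ≠ q1 := fun h =>
    N.Pp_ne_C (uniqP hll (memE (uniqL K.Pp_ne_Q hPp1 (memE h.symm hQq1) K.hPl K.hQl) hPp1')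
      N.hPl K.hCl N.hCl)
  have d2 : K.Pp ∉ N.lAP := fun h => K.Pp_ne_A (uniqP hAPAP K.hP3 h K.hA3 N.hA3)
  have d3 : A ∉ p1 := fun h => h4 (memE (uniqL (Ne.symm K.Pp_ne_A) h hPp1 K.hA3 K.hP3) hPp1')
  have d5 : K.Q ∉ N.lBQ := fun h => K.Q_ne_B (uniqP hBQBQ K.hQ4 h K.hB4 N.hB4)
  have d6 : B ∉ q1 := fun h => h5 (memE (uniqL (Ne.symm K.Q_ne_B) h hQq1 K.hB4 K.hQ4) hQq1')
  -- First Desargues application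
  obtain ⟨ax1, ⟨X1, hX1a, hX1b, hX1x⟩, ⟨Y1, hY1a, hY1b, hY1x⟩, ⟨Z1, hZ1a, hZ1b, hZ1x⟩,
      hv11, hv12, hv13, hv14, hv15, hv16⟩ :=
    hdes K.Pp N.Pp B K.Q N.Q A p1 N.lBR K.lBR q1 N.lAR K.lAR C
      ⟨hPp1, hPp1', N.hP1, N.hB1, K.hB1, K.hP1, c2, c1, c3⟩
      ⟨hQq1, hQq1', N.hQ2, N.hA2, K.hA2, K.hQ2, c5, c4, c6⟩
      ⟨K.Pp_ne_Q, N.Pp_ne_Q, Ne.symm K.hAB, c9, N.lBR_ne_lAR, K.lBR_ne_lAR⟩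
      ⟨⟨K.l, K.hPl, K.hQl, K.hCl⟩, ⟨N.l, N.hPl, N.hQl, N.hCl⟩,
        ⟨ab, K.hBab, K.hAab, K.hCab⟩, c7, N.C_not_lBR, K.C_not_lBR, c8, N.C_not_lAR,
        K.C_not_lAR⟩
  have hNRax1 : N.R ∈ ax1 := memEP (uniqP N.lBR_ne_lAR hY1a hY1b N.hR1 N.hR2) hY1x
  have hKRax1 : K.R ∈ ax1 := memEP (uniqP K.lBR_ne_lAR hZ1a hZ1b K.hR1 K.hR2) hZ1x
  -- Second Desargues application
  obtain ⟨ax2, ⟨X2, hX2a, hX2b, hX2x⟩, ⟨Y2, hY2a, hY2b, hY2x⟩, ⟨Z2, hZ2a, hZ2b, hZ2x⟩,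
      hw11, hw12, hw13, hw14, hw15, hw16⟩ :=
    hdes K.Pp N.Pp A K.Q N.Q B p1 N.lAP K.lAP q1 N.lBQ K.lBQ C
      ⟨hPp1, hPp1', N.hP3, N.hA3, K.hA3, K.hP3, d2, h4, d3⟩
      ⟨hQq1, hQq1', N.hQ4, N.hB4, K.hB4, K.hQ4, d5, h5, d6⟩
      ⟨K.Pp_ne_Q, N.Pp_ne_Q, K.hAB, c9, N.lAP_ne_lBQ, K.lAP_ne_lBQ⟩
      ⟨⟨K.l, K.hPl, K.hQl, K.hCl⟩, ⟨N.l, N.hPl, N.hQl, N.hCl⟩,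
        ⟨ab, K.hAab, K.hBab, K.hCab⟩, c7, N.C_not_lAP, K.C_not_lAP, c8, N.C_not_lBQ,
        K.C_not_lBQ⟩
  have hNSax2 : N.S ∈ ax2 := memEP (uniqP N.lAP_ne_lBQ hY2a hY2b N.hS3 N.hS4) hY2x
  have hKSax2 : K.S ∈ ax2 := memEP (uniqP K.lAP_ne_lBQ hZ2a hZ2b K.hS3 K.hS4) hZ2x
  -- The common center O
  set O : P := X1 with hO
  have hOp1 : O ∈ p1 := hX1a
  have hOq1 : O ∈ q1 := hX1b
  have hOax1 : O ∈ ax1 := hX1x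
  have hOax2 : O ∈ ax2 := memEP (uniqP c9 hX2a hX2b hX1a hX1b) hX2x
  have oQ : O ≠ K.Q := fun h =>
    N.Pp_ne_C (uniqP hll (memE (uniqL K.Pp_ne_Q hPp1 (memEP h hOp1) K.hPl K.hQl) hPp1')
      N.hPl K.hCl N.hCl)
  have oQ' : O ≠ N.Q := fun h =>
    K.Pp_ne_C (uniqP hll K.hPl (memE (uniqL N.Pp_ne_Q hPp1' (memEP h hOp1) N.hPl N.hQl) hPp1)
      K.hCl N.hCl)
  have oR : O ≠ K.R := fun h =>
    c1 (memE (uniqL K.Pp_ne_R hPp1 (memEP h hOp1) K.hP1 K.hR1) hPp1')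
  have oR' : O ≠ N.R := fun h =>
    c5 (memE (uniqL N.Q_ne_R hQq1' (memEP h hOq1) N.hQ2 N.hR2) hQq1)
  have oS' : O ≠ N.S := fun h => by
    have hNSp1 : N.S ∈ p1 := memEP h hOp1
    rcases eq_or_eq hNSp1 hPp1' N.hS3 N.hP3 with e | e
    · exact N.S_ne_Pp e
    · exact d3 (memE e.symm N.hA3)
  have o1 : O ∉ K.lAR := by
    intro h
    rcases eq_or_eq h K.hQ2 hOq1 hQq1 with e | e
    · exact oQ e
    · exact c4 (memE e.symm hQq1')
  have o2 : O ∉ N.lAR := by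
    intro h
    rcases eq_or_eq h N.hQ2 hOq1 hQq1' with e | e
    · exact oQ' e
    · exact c5 (memE e.symm hQq1)
  have o3 : O ∉ K.lBQ := by
    intro h
    rcases eq_or_eq h K.hQ4 hOq1 hQq1 with e | e
    · exact oQ e
    · exact h5 (memE e.symm hQq1')
  have o4 : O ∉ N.lBQ := by
    intro h
    rcases eq_or_eq h N.hQ4 hOq1 hQq1' with e | e
    · exact oQ' e
    · exact d5 (memE e.symm hQq1)
  have o5 : O ∉ K.lRS := by
    intro h
    rcases eq_or_eq h K.hR5 hOax1 hKRax1 with e | e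
    · exact oR e
    · exact h3 (memE e.symm hNRax1)
  have o6 : O ∉ N.lRS := by
    intro h
    rcases eq_or_eq h N.hR5 hOax1 hNRax1 with e | e
    · exact oR' e
    · -- N.lRS = ax1, so N.S ∈ ax1, hence ax1 = ax2, so K.S ∈ ax1, so ax1 = K.lRS
      have hNSax1 : N.S ∈ ax1 := memE e N.hS5
      have e2 : ax1 = ax2 := uniqL oS' hOax1 hNSax1 hOax2 hNSax2
      have hKSax1 : K.S ∈ ax1 := memE e2.symm hKSax2
      have e3 : ax1 = K.lRS := uniqL (Ne.symm K.S_ne_R) hKRax1 hKSax1 K.hR5 K.hS5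
      exact h3 (memE e3 hNRax1)
  -- Third Desargues application
  have hRR : K.R ≠ N.R := fun h => h1 (memEP h K.hR1)
  have hSS : K.S ≠ N.S := fun h => by
    have hNS3 : N.S ∈ K.lAP := memEP h K.hS3
    rcases eq_or_eq hNS3 K.hA3 N.hS3 N.hA3 with e | e
    · exact N.S_ne_A e
    · exact h4 (memE e.symm N.hP3)
  have hRSRS : K.lRS ≠ N.lRS := fun h => h3 (memE h.symm N.hR5)
  obtain ⟨ax3, ⟨Xa, hXa1, hXa2, hXa3⟩, ⟨Yb, hYb1, hYb2, hYb3⟩, ⟨Zc, hZc1, hZc2, hZc3⟩,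
      hu1, hu2, hu3, hu4, hu5, hu6⟩ :=
    hdes K.R K.Q K.S N.R N.Q N.S K.lAR K.lBQ K.lRS N.lAR N.lBQ N.lRS O
      ⟨K.hR2, K.hQ2, K.hQ4, K.hS4, K.hS5, K.hR5, K.R_not_lBQ, K.Q_not_lRS, K.S_not_lAR⟩
      ⟨N.hR2, N.hQ2, N.hQ4, N.hS4, N.hS5, N.hR5, N.R_not_lBQ, N.Q_not_lRS, N.S_not_lAR⟩
      ⟨hRR, hQQ, hSS, hARAR, hBQBQ, hRSRS⟩
      ⟨⟨ax1, hKRax1, hNRax1, hOax1⟩, ⟨q1, hQq1, hQq1', hOq1⟩, ⟨ax2, hKSax2, hNSax2, hOax2⟩,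
        o1, o3, o5, o2, o4, o6⟩
  have hAax3 : A ∈ ax3 := memEP (uniqP hARAR hXa1 hXa2 K.hA2 N.hA2) hXa3
  have hBax3 : B ∈ ax3 := memEP (uniqP hBQBQ hYb1 hYb2 K.hB4 N.hB4) hYb3
  have e4 : ax3 = ab := uniqL K.hAB hAax3 hBax3 K.hAab K.hBab
  have hZab : Zc ∈ ab := memE e4 hZc3
  have e5 : Zc = Da := uniqP K.lRS_ne_ab hZc1 hZab K.hD5 K.hDab
  have e6 : Zc = Db := uniqP N.lRS_ne_ab hZc2 hZab N.hD5 N.hDab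
  exact e5.symm.trans e6

end ProjHarm

namespace ProjHarm
variable {P L : Type u} [Membership P L] [ProjectivePlane P L]
open Configuration Configuration.HasLines Configuration.HasPoints Configuration.Nondegenerate

/-- Two configurations sharing the line `AR` give the same fourth point:
compare both with a common configuration in general position. -/
theorem bridge {A B C Da Db : P} {ab : L} (hdes : DesarguesProperty P L)
    (h8 : LinesHaveAtLeast P L 8) (Ka : Cfg A B C ab Da) (Kb : Cfg A B C ab Db)
    (hsh : Ka.lAR = Kb.lAR) : Da = Db := by
  obtain ⟨l2, hCl2, hl2⟩ := avoid_lines h8 C [ab, Ka.l, Kb.l] (by norm_num)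
  have hl2ab : l2 ≠ ab := hl2 ab (by simp)
  have hl2a : l2 ≠ Ka.l := hl2 Ka.l (by simp)
  have hl2b : l2 ≠ Kb.l := hl2 Kb.l (by simp)
  have hA_nl2 : A ∉ l2 := fun h => hl2ab (uniqL (Ne.symm Ka.hCA) h hCl2 Ka.hAab Ka.hCab)
  have hB_nl2 : B ∉ l2 := fun h => hl2ab (uniqL (Ne.symm Ka.hCB) h hCl2 Ka.hBab Ka.hCab)
  have hAPa : Ka.lAP ≠ l2 := fun h => hA_nl2 (memE h Ka.hA3)
  have hAPb : Kb.lAP ≠ l2 := fun h => hA_nl2 (memE h Kb.hA3)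
  have hBQa : Ka.lBQ ≠ l2 := fun h => hB_nl2 (memE h Ka.hB4)
  have hBQb : Kb.lBQ ≠ l2 := fun h => hB_nl2 (memE h Kb.hB4)
  set Ua : P := mkPoint hAPa with hUa
  set Ub : P := mkPoint hAPb with hUb
  set Va : P := mkPoint hBQa with hVa
  set Vb : P := mkPoint hBQb with hVb
  have hBUa : B ≠ Ua := fun h => hB_nl2 (memEP h.symm (mkPoint_ax hAPa).2)
  have hBUb : B ≠ Ub := fun h => hB_nl2 (memEP h.symm (mkPoint_ax hAPb).2)
  have hAVa : A ≠ Va := fun h => hA_nl2 (memEP h.symm (mkPoint_ax hBQa).2)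
  have hAVb : A ≠ Vb := fun h => hA_nl2 (memEP h.symm (mkPoint_ax hBQb).2)
  set gBUa : L := mkLine hBUa
  set gBUb : L := mkLine hBUb
  set gAVa : L := mkLine hAVa
  set gAVb : L := mkLine hAVb
  obtain ⟨g, hBg, hg⟩ := avoid_lines h8 B [ab, Ka.lBR, Kb.lBR, gBUa, gBUb] (by norm_num)
  have hB_AVa : B ∉ gAVa := fun h => by
    have e : Va = B := uniqP Ka.lBQ_ne_ab (mkPoint_ax hBQa).1
      (memE (uniqL Ka.hAB (mkLine_ax hAVa).1 h Ka.hAab Ka.hBab) (mkLine_ax hAVa).2)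
      Ka.hB4 Ka.hBab
    exact hB_nl2 (memEP e (mkPoint_ax hBQa).2)
  have hB_AVb : B ∉ gAVb := fun h => by
    have e : Vb = B := uniqP Kb.lBQ_ne_ab (mkPoint_ax hBQb).1
      (memE (uniqL Kb.hAB (mkLine_ax hAVb).1 h Kb.hAab Kb.hBab) (mkLine_ax hAVb).2)
      Kb.hB4 Kb.hBab
    exact hB_nl2 (memEP e (mkPoint_ax hBQb).2)
  obtain ⟨R2, hR2g, hR2T⟩ := avoid_pts h8 g [ab, l2, Kb.lAR, gAVa, Ka.lRS, gAVb, Kb.lRS]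
    (by
      intro t ht
      fin_cases ht
      · exact Ne.symm (hg ab (by simp))
      · exact fun h => hB_nl2 (memE h.symm hBg)
      · exact fun h => Kb.B_not_lAR (memE h.symm hBg)
      · exact fun h => hB_AVa (memE h.symm hBg)
      · exact fun h => Ka.B_not_lRS (memE h.symm hBg)
      · exact fun h => hB_AVb (memE h.symm hBg)
      · exact fun h => Kb.B_not_lRS (memE h.symm hBg))
    (by norm_num)
  have hR2ab : R2 ∉ ab := hR2T ab (by simp)
  have hR2l2 : R2 ∉ l2 := hR2T l2 (by simp)
  have hR2ARb : R2 ∉ Kb.lAR := hR2T Kb.lAR (by simp)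
  have hR2ARa : R2 ∉ Ka.lAR := hsh ▸ hR2ARb
  have hR2AVa : R2 ∉ gAVa := hR2T gAVa (by simp)
  have hR2RSa : R2 ∉ Ka.lRS := hR2T Ka.lRS (by simp)
  have hR2AVb : R2 ∉ gAVb := hR2T gAVb (by simp)
  have hR2RSb : R2 ∉ Kb.lRS := hR2T Kb.lRS (by simp)
  have hR2B : R2 ≠ B := fun h => hR2ab (memEP h.symm Ka.hBab)
  have hR2BRa : R2 ∉ Ka.lBR := by
    intro h
    rcases eq_or_eq h Ka.hB1 hR2g hBg with e | e
    · exact hR2B e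
    · exact hg Ka.lBR (by simp) e.symm
  have hR2BRb : R2 ∉ Kb.lBR := by
    intro h
    rcases eq_or_eq h Kb.hB1 hR2g hBg with e | e
    · exact hR2B e
    · exact hg Kb.lBR (by simp) e.symm
  have hR2BUa : R2 ∉ gBUa := by
    intro h
    rcases eq_or_eq h (mkLine_ax hBUa).1 hR2g hBg with e | e
    · exact hR2B e
    · exact hg gBUa (by simp) e.symm
  have hR2BUb : R2 ∉ gBUb := by
    intro h
    rcases eq_or_eq h (mkLine_ax hBUb).1 hR2g hBg with e | e
    · exact hR2B e
    · exact hg gBUb (by simp) e.symm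
  obtain ⟨D2, K2, hK2l, hK2R⟩ := exists_cfg Ka.hAB Ka.hCA Ka.hCB Ka.hAab Ka.hBab Ka.hCab
    l2 hCl2 hl2ab R2 hR2ab hR2l2
  have hK2Rmem : ∀ {t : L}, K2.R ∈ t → R2 ∈ t := fun h => memEP hK2R h
  have hK2Rmem' : ∀ {t : L}, R2 ∉ t → K2.R ∉ t := fun h h2 => h (hK2Rmem h2)
  have hP2l2 : K2.Pp ∈ l2 := memE hK2l K2.hPl
  have hQ2l2 : K2.Q ∈ l2 := memE hK2l K2.hQl
  have hP2APa : K2.Pp ∉ Ka.lAP := by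
    intro h
    have e : K2.Pp = Ua := uniqP hAPa h hP2l2 (mkPoint_ax hAPa).1 (mkPoint_ax hAPa).2
    have e2 : K2.lBR = gBUa :=
      uniqL hBUa K2.hB1 (memEP e K2.hP1) (mkLine_ax hBUa).1 (mkLine_ax hBUa).2
    exact hR2BUa (memE e2 (hK2Rmem K2.hR1))
  have hP2APb : K2.Pp ∉ Kb.lAP := by
    intro h
    have e : K2.Pp = Ub := uniqP hAPb h hP2l2 (mkPoint_ax hAPb).1 (mkPoint_ax hAPb).2
    have e2 : K2.lBR = gBUb :=
      uniqL hBUb K2.hB1 (memEP e K2.hP1) (mkLine_ax hBUb).1 (mkLine_ax hBUb).2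
    exact hR2BUb (memE e2 (hK2Rmem K2.hR1))
  have hQ2BQa : K2.Q ∉ Ka.lBQ := by
    intro h
    have e : K2.Q = Va := uniqP hBQa h hQ2l2 (mkPoint_ax hBQa).1 (mkPoint_ax hBQa).2
    have e2 : K2.lAR = gAVa :=
      uniqL hAVa K2.hA2 (memEP e K2.hQ2) (mkLine_ax hAVa).1 (mkLine_ax hAVa).2
    exact hR2AVa (memE e2 (hK2Rmem K2.hR2))
  have hQ2BQb : K2.Q ∉ Kb.lBQ := by
    intro h
    have e : K2.Q = Vb := uniqP hBQb h hQ2l2 (mkPoint_ax hBQb).1 (mkPoint_ax hBQb).2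
    have e2 : K2.lAR = gAVb :=
      uniqL hAVb K2.hA2 (memEP e K2.hQ2) (mkLine_ax hAVb).1 (mkLine_ax hAVb).2
    exact hR2AVb (memE e2 (hK2Rmem K2.hR2))
  have hlla : Ka.l ≠ K2.l := by rw [hK2l]; exact fun h => hl2a h.symm
  have hllb : Kb.l ≠ K2.l := by rw [hK2l]; exact fun h => hl2b h.symm
  have ea : Da = D2 := core hdes Ka K2 hlla (hK2Rmem' hR2BRa) (hK2Rmem' hR2ARa)
    (hK2Rmem' hR2RSa) hP2APa hQ2BQa
  have eb : Db = D2 := core hdes Kb K2 hllb (hK2Rmem' hR2BRb) (hK2Rmem' hR2ARb)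
    (hK2Rmem' hR2RSb) hP2APb hQ2BQb
  exact ea.trans eb.symm

/-- Invariance when the second configuration's auxiliary point avoids `AR`. -/
theorem invariance_sub {A B C Da Db : P} {ab : L} (hdes : DesarguesProperty P L)
    (h8 : LinesHaveAtLeast P L 8) (K : Cfg A B C ab Da) (K' : Cfg A B C ab Db)
    (hra : K'.R ∉ K.lAR) : Da = Db := by
  have hBQAR : K.lBQ ≠ K'.lAR := fun h => K'.B_not_lAR (memE h K.hB4)
  set w1 : P := mkPoint hBQAR with hw1def
  have hw1C : w1 ≠ C := fun h => K.C_not_lBQ (memEP h (mkPoint_ax hBQAR).1)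
  set gCw1 : L := mkLine (Ne.symm hw1C) with hgCw1
  obtain ⟨l1, hCl1, hl1⟩ := avoid_lines h8 C [ab, K.l, K'.l, gCw1] (by norm_num)
  have hl1ab : l1 ≠ ab := hl1 ab (by simp)
  have hl1K : l1 ≠ K.l := hl1 K.l (by simp)
  have hl1K' : l1 ≠ K'.l := hl1 K'.l (by simp)
  have hl1g : l1 ≠ gCw1 := hl1 gCw1 (by simp)
  have hA_nl1 : A ∉ l1 := fun h => hl1ab (uniqL (Ne.symm K.hCA) h hCl1 K.hAab K.hCab)
  have hB_nl1 : B ∉ l1 := fun h => hl1ab (uniqL (Ne.symm K.hCB) h hCl1 K.hBab K.hCab)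
  have hAPl1 : K.lAP ≠ l1 := fun h => hA_nl1 (memE h K.hA3)
  have hBQl1 : K.lBQ ≠ l1 := fun h => hB_nl1 (memE h K.hB4)
  set U : P := mkPoint hAPl1 with hUdef
  set V : P := mkPoint hBQl1 with hVdef
  have hBU : B ≠ U := fun h => hB_nl1 (memEP h.symm (mkPoint_ax hAPl1).2)
  have hAV : A ≠ V := fun h => hA_nl1 (memEP h.symm (mkPoint_ax hBQl1).2)
  set gBU : L := mkLine hBU with hgBU
  set gAV : L := mkLine hAV with hgAV
  obtain ⟨R1, hR1g, hR1T⟩ := avoid_pts h8 K'.lAR [ab, l1, K.lBR, K.lAR, gBU, gAV, K.lRS]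
    (by
      intro t ht
      fin_cases ht
      · exact fun h => K'.hRab (memE h.symm K'.hR2)
      · exact fun h => hA_nl1 (memE h.symm K'.hA2)
      · exact fun h => K.A_not_lBR (memE h.symm K'.hA2)
      · exact fun h => hra (memE h.symm K'.hR2)
      · exact fun h => K'.B_not_lAR (memE h (mkLine_ax hBU).1)
      · intro h
        have hVAR : V ∈ K'.lAR := memE h (mkLine_ax hAV).2
        have e : V = w1 := uniqP hBQAR (mkPoint_ax hBQl1).1 hVAR
          (mkPoint_ax hBQAR).1 (mkPoint_ax hBQAR).2
        have hw1l1 : w1 ∈ l1 := memEP e (mkPoint_ax hBQl1).2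
        exact hl1g (uniqL (Ne.symm hw1C) hCl1 hw1l1
          (mkLine_ax (Ne.symm hw1C)).1 (mkLine_ax (Ne.symm hw1C)).2)
      · exact fun h => K.A_not_lRS (memE h.symm K'.hA2))
    (by norm_num)
  have hR1ab : R1 ∉ ab := hR1T ab (by simp)
  have hR1l1 : R1 ∉ l1 := hR1T l1 (by simp)
  have hR1BR : R1 ∉ K.lBR := hR1T K.lBR (by simp)
  have hR1AR : R1 ∉ K.lAR := hR1T K.lAR (by simp)
  have hR1BU : R1 ∉ gBU := hR1T gBU (by simp)
  have hR1AV : R1 ∉ gAV := hR1T gAV (by simp)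
  have hR1RS : R1 ∉ K.lRS := hR1T K.lRS (by simp)
  obtain ⟨D1, K1, hK1l, hK1R⟩ := exists_cfg K.hAB K.hCA K.hCB K.hAab K.hBab K.hCab
    l1 hCl1 hl1ab R1 hR1ab hR1l1
  have hK1Rmem : ∀ {t : L}, K1.R ∈ t → R1 ∈ t := fun h => memEP hK1R h
  have hK1Rmem' : ∀ {t : L}, R1 ∉ t → K1.R ∉ t := fun h h2 => h (hK1Rmem h2)
  have hP1l1 : K1.Pp ∈ l1 := memE hK1l K1.hPl
  have hQ1l1 : K1.Q ∈ l1 := memE hK1l K1.hQl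
  have hP1AP : K1.Pp ∉ K.lAP := by
    intro h
    have e : K1.Pp = U := uniqP hAPl1 h hP1l1 (mkPoint_ax hAPl1).1 (mkPoint_ax hAPl1).2
    have e2 : K1.lBR = gBU :=
      uniqL hBU K1.hB1 (memEP e K1.hP1) (mkLine_ax hBU).1 (mkLine_ax hBU).2
    exact hR1BU (memE e2 (hK1Rmem K1.hR1))
  have hQ1BQ : K1.Q ∉ K.lBQ := by
    intro h
    have e : K1.Q = V := uniqP hBQl1 h hQ1l1 (mkPoint_ax hBQl1).1 (mkPoint_ax hBQl1).2
    have e2 : K1.lAR = gAV :=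
      uniqL hAV K1.hA2 (memEP e K1.hQ2) (mkLine_ax hAV).1 (mkLine_ax hAV).2
    exact hR1AV (memE e2 (hK1Rmem K1.hR2))
  have hllK : K.l ≠ K1.l := by rw [hK1l]; exact fun h => hl1K h.symm
  have e1 : Da = D1 := core hdes K K1 hllK (hK1Rmem' hR1BR) (hK1Rmem' hR1AR)
    (hK1Rmem' hR1RS) hP1AP hQ1BQ
  have hR1A : A ≠ R1 := fun h => hR1ab (memEP h K.hAab)
  have hsh : K1.lAR = K'.lAR :=
    uniqL hR1A K1.hA2 (hK1Rmem K1.hR2) K'.hA2 hR1g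
  exact e1.trans (bridge hdes h8 K1 K' hsh)

/-- The invariance theorem: any two configurations for `A B C` produce the same
fourth harmonic point. -/
theorem invariance {A B C Da Db : P} {ab : L} (hdes : DesarguesProperty P L)
    (h8 : LinesHaveAtLeast P L 8) (K : Cfg A B C ab Da) (K' : Cfg A B C ab Db) :
    Da = Db := by
  by_cases hra : K'.R ∈ K.lAR
  · by_cases hrb : K'.R ∈ K.lBR
    · have e : K'.R = K.R := uniqP K.lBR_ne_lAR hrb hra K.hR1 K.hR2
      have hsh : K.lAR = K'.lAR :=
        uniqL (Ne.symm K.R_ne_A) K.hA2 K.hR2 K'.hA2 (memEP e K'.hR2)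
      exact bridge hdes h8 K K' hsh
    · exact invariance_sub hdes h8 K.symmAB K'.symmAB hrb
  · exact invariance_sub hdes h8 K K' hra

end ProjHarm

namespace ProjHarm
variable {P L : Type u} [Membership P L] [ProjectivePlane P L]
open Configuration Configuration.HasLines Configuration.HasPoints Configuration.Nondegenerate

/-- Invariance theorem at the level of `IsHarmonic`. -/
theorem harmonic_unique {A B C D D' : P} (hdes : DesarguesProperty P L)
    (h8 : LinesHaveAtLeast P L 8) (hCA : C ≠ A) (hCB : C ≠ B)
    (h : IsHarmonic P L A B C D) (h' : IsHarmonic P L A B C D') : D = D' := by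
  have hAB := h.1
  obtain ⟨K⟩ := toCfg h hCA hCB (mkLine_ax hAB).1 (mkLine_ax hAB).2
  obtain ⟨K'⟩ := toCfg h' hCA hCB (mkLine_ax hAB).1 (mkLine_ax hAB).2
  exact invariance hdes h8 K K'

theorem harm_swap {A B C D : P} (h : IsHarmonic P L A B C D) : IsHarmonic P L B A C D := by
  obtain ⟨hAB, ab, l, R, Pp, Q, S, hA0, hB0, hC0, hCl, hlab, hRab, hRl, hPl, hBRP, hQl,
    hARQ, hAPS, hBQS, hD0, hRSD⟩ := h
  exact ⟨Ne.symm hAB, ab, l, R, Q, Pp, S, hB0, hA0, hC0, hCl, hlab, hRab, hRl, hQl, hARQ,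
    hPl, hBRP, hBQS, hAPS, hD0, hRSD⟩

/-- If `C = A` then necessarily `D = A`. -/
theorem harm_degenerate_left {A B D : P} (h : IsHarmonic P L A B A D) : D = A := by
  obtain ⟨hAB, ab, l, R, Pp, Q, S, hA0, hB0, hC0, hCl, hlab, hRab, hRl, hPl,
    ⟨lBR, hB1, hR1, hP1⟩, hQl, ⟨lAR, hA2, hR2, hQ2⟩, ⟨lAP, hA3, hP3, hS3⟩,
    ⟨lBQ, hB4, hQ4, hS4⟩, hD0, ⟨lRS, hR5, hS5, hD5⟩⟩ := h
  have hlARl : lAR ≠ l := fun h => hRl (memE h hR2)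
  have hQA : Q = A := uniqP hlARl hQ2 hQl hA2 hCl
  have hlBQab : lBQ = ab := uniqL hAB (memEP hQA hQ4) hB4 hA0 hB0
  have hSab : S ∈ ab := memE hlBQab hS4
  have hlAPab : lAP ≠ ab := by
    intro h
    have hPab : Pp ∈ ab := memE h hP3
    have hPA : Pp = A := uniqP hlab hPl hPab hCl hA0
    exact hRab (memE (uniqL hAB (memEP hPA hP1) hB1 hA0 hB0) hR1)
  have hSA : S = A := uniqP hlAPab hS3 hSab hA3 hA0
  have hlRSab : lRS ≠ ab := fun h => hRab (memE h hR5)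
  exact uniqP hlRSab hD5 hD0 (memEP hSA hS5) hA0

/-- If `C = B` then necessarily `D = B`. -/
theorem harm_degenerate_right {A B D : P} (h : IsHarmonic P L A B B D) : D = B :=
  harm_degenerate_left (harm_swap h)

/-- `h(A,B;A) = A` always holds. -/
theorem harm_self {A B : P} {ab : L} (h8 : LinesHaveAtLeast P L 8) (hAB : A ≠ B)
    (hA : A ∈ ab) (hB : B ∈ ab) : IsHarmonic P L A B A A := by
  obtain ⟨l, hAl, hl⟩ := avoid_lines h8 A [ab] (by norm_num)
  have hlab : l ≠ ab := hl ab (by simp)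
  obtain ⟨g, hAg, hg⟩ := avoid_lines h8 A [ab, l] (by norm_num)
  obtain ⟨R, hRg, hRT⟩ := avoid_pts h8 g [ab, l]
    (by
      intro t ht
      fin_cases ht
      · exact Ne.symm (hg ab (by simp))
      · exact Ne.symm (hg l (by simp)))
    (by norm_num)
  have hRab : R ∉ ab := hRT ab (by simp)
  have hRl : R ∉ l := hRT l (by simp)
  have hBR : B ≠ R := fun h => hRab (memEP h hB)
  have hAR : A ≠ R := fun h => hRab (memEP h hA)
  have hRA : R ≠ A := Ne.symm hAR
  set lBR : L := mkLine hBR with hlBRdef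
  have hlBRl : lBR ≠ l := fun h => hRl (memE h (mkLine_ax hBR).2)
  set Pp : P := mkPoint hlBRl with hPpdef
  have hPA : Pp ≠ A := by
    intro h
    have : A ∈ lBR := memEP h (mkPoint_ax hlBRl).1
    exact hRab (memE (uniqL hAB this (mkLine_ax hBR).1 hA hB) (mkLine_ax hBR).2)
  exact ⟨hAB, ab, l, R, Pp, A, A, hA, hB, hA, hAl, hlab, hRab, hRl, (mkPoint_ax hlBRl).2,
    ⟨lBR, (mkLine_ax hBR).1, (mkLine_ax hBR).2, (mkPoint_ax hlBRl).1⟩, hAl,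
    ⟨mkLine hAR, (mkLine_ax hAR).1, (mkLine_ax hAR).2, (mkLine_ax hAR).1⟩,
    ⟨mkLine (Ne.symm hPA), (mkLine_ax (Ne.symm hPA)).1, (mkLine_ax (Ne.symm hPA)).2,
      (mkLine_ax (Ne.symm hPA)).1⟩,
    ⟨ab, hB, hA, hA⟩, hA,
    ⟨mkLine hRA, (mkLine_ax hRA).1, (mkLine_ax hRA).2, (mkLine_ax hRA).2⟩⟩

end ProjHarm

namespace ProjHarm
variable {P L : Type u} [Membership P L] [ProjectivePlane P L]
open Configuration Configuration.HasLines Configuration.HasPoints Configuration.Nondegenerate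

/-- View a dual point as a line. -/
def lv (a : Dual L) : L := a
/-- View a dual line as a point. -/
def pv (V : Dual P) : P := V

/-- Every point lies on at least eight lines (dual of `h8`). -/
theorem h8_dual (h8 : LinesHaveAtLeast P L 8) : LinesHaveAtLeast (Dual L) (Dual P) 8 := by
  intro X
  obtain ⟨s, hs, hmem⟩ := lines_through h8 (pv X)
  exact ⟨s, hs, hmem⟩

/-- Desargues's property is self-dual: the dual plane satisfies it too
(this is the converse Desargues theorem). -/
theorem desargues_dual (hdes : DesarguesProperty P L) :
    DesarguesProperty (Dual L) (Dual P) := by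
  intro a b c a' b' c' V1 V2 V3 V1' V2' V3' l0 ht ht' hdist hcen
  -- reinterpret all data in the original plane
  have hV1a : pv V1 ∈ lv a := ht.1
  have hV1b : pv V1 ∈ lv b := ht.2.1
  have hV2b : pv V2 ∈ lv b := ht.2.2.1
  have hV2c : pv V2 ∈ lv c := ht.2.2.2.1
  have hV3c : pv V3 ∈ lv c := ht.2.2.2.2.1
  have hV3a : pv V3 ∈ lv a := ht.2.2.2.2.2.1
  have hV2na : pv V2 ∉ lv a := ht.2.2.2.2.2.2.1
  have hV3nb : pv V3 ∉ lv b := ht.2.2.2.2.2.2.2.1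
  have hV1nc : pv V1 ∉ lv c := ht.2.2.2.2.2.2.2.2
  have hV1'a' : pv V1' ∈ lv a' := ht'.1
  have hV1'b' : pv V1' ∈ lv b' := ht'.2.1
  have hV2'b' : pv V2' ∈ lv b' := ht'.2.2.1
  have hV2'c' : pv V2' ∈ lv c' := ht'.2.2.2.1
  have hV3'c' : pv V3' ∈ lv c' := ht'.2.2.2.2.1
  have hV3'a' : pv V3' ∈ lv a' := ht'.2.2.2.2.2.1
  have hV2'na' : pv V2' ∉ lv a' := ht'.2.2.2.2.2.2.1
  have hV3'nb' : pv V3' ∉ lv b' := ht'.2.2.2.2.2.2.2.1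
  have hV1'nc' : pv V1' ∉ lv c' := ht'.2.2.2.2.2.2.2.2
  have haa' : lv a ≠ lv a' := fun h => hdist.1 h
  have hbb' : lv b ≠ lv b' := fun h => hdist.2.1 h
  have hcc' : lv c ≠ lv c' := fun h => hdist.2.2.1 h
  have hV1V1' : pv V1 ≠ pv V1' := fun h => hdist.2.2.2.1 h
  have hV2V2' : pv V2 ≠ pv V2' := fun h => hdist.2.2.2.2.1 h
  have hV3V3' : pv V3 ≠ pv V3' := fun h => hdist.2.2.2.2.2 h
  obtain ⟨⟨Xa, hXaa, hXaa', hXal0⟩, ⟨Xb, hXbb, hXbb', hXbl0⟩, ⟨Xc, hXcc, hXcc', hXcl0⟩,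
    nl0V1, nl0V2, nl0V3, nl0V1', nl0V2', nl0V3'⟩ :
      (∃ pa : P, pa ∈ lv a ∧ pa ∈ lv a' ∧ pa ∈ lv l0) ∧
      (∃ pb : P, pb ∈ lv b ∧ pb ∈ lv b' ∧ pb ∈ lv l0) ∧
      (∃ pc : P, pc ∈ lv c ∧ pc ∈ lv c' ∧ pc ∈ lv l0) ∧
      pv V1 ∉ lv l0 ∧ pv V2 ∉ lv l0 ∧ pv V3 ∉ lv l0 ∧
      pv V1' ∉ lv l0 ∧ pv V2' ∉ lv l0 ∧ pv V3' ∉ lv l0 := hcen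
  -- auxiliary inequalities
  have hab : lv a ≠ b := fun h => hV2na (memE h.symm hV2b)
  have hac : lv a ≠ c := fun h => hV2na (memE h.symm hV2c)
  have hcb : lv c ≠ b := fun h => hV3nb (memE h hV3c)
  have ha'b' : lv a' ≠ b' := fun h => hV2'na' (memE h.symm hV2'b')
  have ha'c' : lv a' ≠ c' := fun h => hV2'na' (memE h.symm hV2'c')
  have hc'b' : lv c' ≠ b' := fun h => hV3'nb' (memE h hV3'c')
  set k1 : L := mkLine hV1V1' with hk1def
  have hV1k1 : pv V1 ∈ k1 := (mkLine_ax hV1V1').1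
  have hV1'k1 : pv V1' ∈ k1 := (mkLine_ax hV1V1').2
  set k2 : L := mkLine hV2V2' with hk2def
  have hV2k2 : pv V2 ∈ k2 := (mkLine_ax hV2V2').1
  have hV2'k2 : pv V2' ∈ k2 := (mkLine_ax hV2V2').2
  have nV1a' : pv V1 ∉ lv a' := fun h =>
    nl0V1 (memEP (uniqP haa' hV1a h hXaa hXaa').symm hXal0)
  have nV1'a : pv V1' ∉ lv a := fun h =>
    nl0V1' (memEP (uniqP haa' h hV1'a' hXaa hXaa').symm hXal0)
  have nV2c' : pv V2 ∉ lv c' := fun h =>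
    nl0V2 (memEP (uniqP hcc' hV2c h hXcc hXcc').symm hXcl0)
  have nV2'c : pv V2' ∉ lv c := fun h =>
    nl0V2' (memEP (uniqP hcc' h hV2'c' hXcc hXcc').symm hXcl0)
  have nXak1 : Xa ∉ k1 := by
    intro h
    rcases eq_or_eq h hV1k1 hXaa hV1a with e | e
    · exact nl0V1 (memEP e hXal0)
    · exact nV1'a (memE e hV1'k1)
  have nXck2 : Xc ∉ k2 := by
    intro h
    rcases eq_or_eq h hV2k2 hXcc hV2c with e | e
    · exact nl0V2 (memEP e hXcl0)
    · exact nV2'c (memE e hV2'k2)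
  have hV1V2 : pv V1 ≠ pv V2 := fun h => hV2na (memEP h hV1a)
  have hV1'V2' : pv V1' ≠ pv V2' := fun h => hV2'na' (memEP h hV1'a')
  have hXaXc : Xa ≠ Xc := by
    intro e
    have e2 : Xa = pv V3 := uniqP hac hXaa (memEP e.symm hXcc) hV3a hV3c
    exact nl0V3 (memEP e2 hXal0)
  have hk1k2 : k1 ≠ k2 := by
    intro e
    have e2 : k1 = lv b := uniqL hV1V2 hV1k1 (memE e.symm hV2k2) hV1b hV2b
    have e3 : pv V1' = Xb := uniqP hbb' (memE e2 hV1'k1) hV1'b' hXbb hXbb'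
    exact nl0V1' (memEP e3.symm hXbl0)
  have nXbk1 : Xb ∉ k1 := by
    intro h
    rcases eq_or_eq h hV1k1 hXbb hV1b with e | e
    · exact nl0V1 (memEP e hXbl0)
    · have e3 : pv V1' = Xb := uniqP hbb' (memE e hV1'k1) hV1'b' hXbb hXbb'
      exact nl0V1' (memEP e3.symm hXbl0)
  have nXbk2 : Xb ∉ k2 := by
    intro h
    rcases eq_or_eq h hV2k2 hXbb hV2b with e | e
    · exact nl0V2 (memEP e hXbl0)
    · have e3 : pv V2' = Xb := uniqP hbb' (memE e hV2'k2) hV2'b' hXbb hXbb'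
      exact nl0V2' (memEP e3.symm hXbl0)
  have nXba' : Xb ∉ lv a' := by
    intro h
    have e : Xb = pv V1' := uniqP ha'b' h hXbb' hV1'a' hV1'b'
    exact nl0V1' (memEP e hXbl0)
  have nXba : Xb ∉ lv a := by
    intro h
    have e : Xb = pv V1 := uniqP hab h hXbb hV1a hV1b
    exact nl0V1 (memEP e hXbl0)
  have nXbc' : Xb ∉ lv c' := by
    intro h
    have e : Xb = pv V2' := uniqP hc'b' h hXbb' hV2'c' hV2'b'
    exact nl0V2' (memEP e hXbl0)
  have nXbc : Xb ∉ lv c := by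
    intro h
    have e : Xb = pv V2 := uniqP hcb h hXbb hV2c hV2b
    exact nl0V2 (memEP e hXbl0)
  obtain ⟨ax, ⟨O1, hO1k1, hO1k2, hO1ax⟩, ⟨Y, hYa', hYc', hYax⟩, ⟨Z, hZa, hZc, hZax⟩,
      nxV1, nxV1', nxXa, nxV2, nxV2', nxXc⟩ :=
    hdes (pv V1) (pv V1') Xa (pv V2) (pv V2') Xc k1 (lv a') (lv a) k2 (lv c')
      (lv c) Xb
      ⟨hV1k1, hV1'k1, hV1'a', hXaa', hXaa, hV1a, nV1a', nV1'a, nXak1⟩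
      ⟨hV2k2, hV2'k2, hV2'c', hXcc', hXcc, hV2c, nV2c', nV2'c, nXck2⟩
      ⟨hV1V2, hV1'V2', hXaXc, hk1k2, ha'c', hac⟩
      ⟨⟨lv b, hV1b, hV2b, hXbb⟩, ⟨lv b', hV1'b', hV2'b', hXbb'⟩,
        ⟨lv l0, hXal0, hXcl0, hXbl0⟩, nXbk1, nXba', nXba, nXbk2, nXbc', nXbc⟩
  have hV3'ax : pv V3' ∈ ax := memEP (uniqP ha'c' hYa' hYc' hV3'a' hV3'c') hYax
  have hV3ax : pv V3 ∈ ax := memEP (uniqP hac hZa hZc hV3a hV3c) hZax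
  refine ⟨O1, ⟨k1, hV1k1, hV1'k1, hO1k1⟩, ⟨k2, hV2k2, hV2'k2, hO1k2⟩,
    ⟨ax, hV3ax, hV3'ax, hO1ax⟩, ?_, ?_, ?_, ?_, ?_, ?_⟩
  · -- O1 ∉ a
    intro h
    have h' : O1 ∈ lv a := h
    rcases eq_or_eq h' hV1a hO1k1 hV1k1 with e | e
    · exact nxV1 (memEP e hO1ax)
    · exact nV1'a (memE e.symm hV1'k1)
  · -- O1 ∉ b
    intro h
    have h' : O1 ∈ lv b := h
    rcases eq_or_eq h' hV1b hO1k1 hV1k1 with e | e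
    · exact nxV1 (memEP e hO1ax)
    · have e3 : pv V1' = Xb := uniqP hbb' (memE e.symm hV1'k1) hV1'b' hXbb hXbb'
      exact nl0V1' (memEP e3.symm hXbl0)
  · -- O1 ∉ c
    intro h
    have h' : O1 ∈ lv c := h
    rcases eq_or_eq h' hV2c hO1k2 hV2k2 with e | e
    · exact nxV2 (memEP e hO1ax)
    · have e3 : pv V2' = Xc := uniqP hcc' (memE e.symm hV2'k2) hV2'c' hXcc hXcc'
      exact nl0V2' (memEP e3.symm hXcl0)
  · -- O1 ∉ a'
    intro h
    have h' : O1 ∈ lv a' := h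
    rcases eq_or_eq h' hV1'a' hO1k1 hV1'k1 with e | e
    · exact nxV1' (memEP e hO1ax)
    · exact nV1a' (memE e.symm hV1k1)
  · -- O1 ∉ b'
    intro h
    have h' : O1 ∈ lv b' := h
    rcases eq_or_eq h' hV1'b' hO1k1 hV1'k1 with e | e
    · exact nxV1' (memEP e hO1ax)
    · have e3 : pv V1 = Xb := uniqP (Ne.symm hbb') (memE e.symm hV1k1) hV1b hXbb' hXbb
      exact nl0V1 (memEP e3.symm hXbl0)
  · -- O1 ∉ c'
    intro h
    have h' : O1 ∈ lv c' := h
    rcases eq_or_eq h' hV2'c' hO1k2 hV2'k2 with e | e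
    · exact nxV2' (memEP e hO1ax)
    · have e3 : pv V2 = Xc := uniqP (Ne.symm hcc') (memE e.symm hV2k2) hV2c hXcc' hXcc
      exact nl0V2 (memEP e3.symm hXcl0)

end ProjHarm

namespace ProjHarm
variable {P L : Type u} [Membership P L] [ProjectivePlane P L]
open Configuration Configuration.HasLines Configuration.HasPoints Configuration.Nondegenerate

/-- A harmonic range is cut out by a harmonic pencil (through any point `O`
off the base line). -/
theorem line_to_pencil (hdes : DesarguesProperty P L) (h8 : LinesHaveAtLeast P L 8)
    {A B C D O : P} {ab : L} (hCA : C ≠ A) (hCB : C ≠ B)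
    (hA : A ∈ ab) (hB : B ∈ ab) (hC : C ∈ ab) (hD : D ∈ ab)
    (hharm : IsHarmonic P L A B C D) (hOab : O ∉ ab)
    {a b c d : L} (hOa : O ∈ a) (hAa : A ∈ a) (hOb : O ∈ b) (hBb : B ∈ b)
    (hOc : O ∈ c) (hCc : C ∈ c) (hOd : O ∈ d) (hDd : D ∈ d) :
    IsHarmonic (Dual L) (Dual P) a b c d := by
  have hAB : A ≠ B := hharm.1
  have hOC : O ≠ C := fun h => hOab (memEP h.symm hC)
  have hOB : O ≠ B := fun h => hOab (memEP h.symm hB)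
  have hOA : O ≠ A := fun h => hOab (memEP h.symm hA)
  have hOD : O ≠ D := fun h => hOab (memEP h.symm hD)
  obtain ⟨l, hCl, hl⟩ := avoid_lines h8 C [ab, c] (by norm_num)
  have hlab : l ≠ ab := hl ab (by simp)
  have hlc : l ≠ c := hl c (by simp)
  have hOl : O ∉ l := fun h => hlc (uniqL hOC h hCl hOc hCc)
  obtain ⟨D0, K, hKl, hKR⟩ := exists_cfg hAB hCA hCB hA hB hC l hCl hlab O hOab hOl
  have hD0D : D0 = D := harmonic_unique hdes h8 hCA hCB (ofCfg K) hharm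
  subst hD0D
  have hOlBR : O ∈ K.lBR := memEP hKR K.hR1
  have hOlAR : O ∈ K.lAR := memEP hKR K.hR2
  have hOlRS : O ∈ K.lRS := memEP hKR K.hR5
  have hKRb : K.lBR = b := uniqL hOB hOlBR K.hB1 hOb hBb
  have hKRa : K.lAR = a := uniqL hOA hOlAR K.hA2 hOa hAa
  have hKRd : K.lRS = d := uniqL hOD hOlRS K.hD5 hOd hDd
  have hSd : K.S ∈ d := memE hKRd K.hS5
  have hab' : a ≠ b := fun e => hOab (memE (uniqL hAB hAa (memE e.symm hBb) hA hB) hOa)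
  have hPb : K.Pp ∈ b := memE hKRb K.hP1
  have col9 : Col (Dual L) (Dual P) b K.lAP K.l := by
    exact ⟨K.Pp, hPb, K.hP3, K.hPl⟩
  have col11 : Col (Dual L) (Dual P) a K.lAP ab := by
    exact ⟨A, hAa, K.hA3, hA⟩
  have hQa : K.Q ∈ a := memE hKRa K.hQ2
  have col12 : Col (Dual L) (Dual P) a K.l K.lBQ := by
    exact ⟨K.Q, hQa, K.hQl, K.hQ4⟩
  have col13 : Col (Dual L) (Dual P) b ab K.lBQ := by
    exact ⟨B, hBb, hB, K.hB4⟩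
  have col15 : Col (Dual L) (Dual P) K.lAP K.lBQ d := by
    exact ⟨K.S, K.hS3, K.hS4, hSd⟩
  exact ⟨hab', O, C, K.lAP, K.l, ab, K.lBQ,
    hOa, hOb, hOc, hCc, Ne.symm hOC,
    (fun h => K.R_not_lAP (memEP hKR.symm h)), K.C_not_lAP, K.hCl,
    col9, hC, col11, col12, col13, hOd, col15⟩

/-- A harmonic pencil cuts out a harmonic range on any line avoiding its
center (dual of `line_to_pencil`). -/
theorem pencil_to_line (hdes : DesarguesProperty P L) (h8 : LinesHaveAtLeast P L 8)
    {a b c d : L} {O : P} (hca : c ≠ a) (hcb : c ≠ b)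
    (hOa : O ∈ a) (hOb : O ∈ b) (hOc : O ∈ c) (hOd : O ∈ d)
    (hharm : IsHarmonic (Dual L) (Dual P) a b c d)
    {m : L} (hOm : O ∉ m) {A' B' C' D' : P}
    (hA'm : A' ∈ m) (hA'a : A' ∈ a) (hB'm : B' ∈ m) (hB'b : B' ∈ b)
    (hC'm : C' ∈ m) (hC'c : C' ∈ c) (hD'm : D' ∈ m) (hD'd : D' ∈ d) :
    IsHarmonic P L A' B' C' D' :=
  line_to_pencil (P := Dual L) (L := Dual P) (desargues_dual hdes) (h8_dual h8)
    hca hcb hOa hOb hOc hOd hharm hOm hA'm hA'a hB'm hB'b hC'm hC'c hD'm hD'd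

/-- A perspectivity preserves harmonic quadruples. -/
theorem persp_step (hdes : DesarguesProperty P L) (h8 : LinesHaveAtLeast P L 8)
    {ab m : L} {f : Rng P L ab → Rng P L m} (hf : IsPerspectivity P L ab m f)
    {A B C D : P} (hA : A ∈ ab) (hB : B ∈ ab) (hC : C ∈ ab) (hD : D ∈ ab)
    (hharm : IsHarmonic P L A B C D) :
    IsHarmonic P L ((f ⟨A, hA⟩ : P)) ((f ⟨B, hB⟩ : P)) ((f ⟨C, hC⟩ : P))
      ((f ⟨D, hD⟩ : P)) := by
  obtain ⟨O, hOab, hOm, hk⟩ := hf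
  have hAB : A ≠ B := hharm.1
  have hfAB : (f ⟨A, hA⟩ : P) ≠ (f ⟨B, hB⟩ : P) := by
    intro h
    obtain ⟨kA, hOkA, hAkA, hfAkA⟩ := hk ⟨A, hA⟩
    obtain ⟨kB, hOkB, hBkB, hfBkB⟩ := hk ⟨B, hB⟩
    have hOfA : O ≠ (f ⟨A, hA⟩ : P) := fun e => hOm (memEP e.symm (f ⟨A, hA⟩).2)
    have e : kA = kB := uniqL hOfA hOkA hfAkA hOkB (memEP h.symm hfBkB)
    have e2 : kA = ab := uniqL hAB hAkA (memE e.symm hBkB) hA hB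
    exact hOab (memE e2 hOkA)
  by_cases hCA : C = A
  · have hDA : D = A := harm_degenerate_left (by rw [hCA] at hharm; exact hharm)
    have eC : (⟨C, hC⟩ : Rng P L ab) = ⟨A, hA⟩ := Subtype.ext hCA
    have eD : (⟨D, hD⟩ : Rng P L ab) = ⟨A, hA⟩ := Subtype.ext hDA
    rw [eC, eD]
    exact harm_self h8 hfAB (f ⟨A, hA⟩).2 (f ⟨B, hB⟩).2
  by_cases hCB : C = B
  · have hDB : D = B := harm_degenerate_right (by rw [hCB] at hharm; exact hharm)
    have eC : (⟨C, hC⟩ : Rng P L ab) = ⟨B, hB⟩ := Subtype.ext hCB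
    have eD : (⟨D, hD⟩ : Rng P L ab) = ⟨B, hB⟩ := Subtype.ext hDB
    rw [eC, eD]
    exact harm_swap (harm_self h8 (Ne.symm hfAB) (f ⟨B, hB⟩).2 (f ⟨A, hA⟩).2)
  · obtain ⟨kA, hOkA, hAkA, hfAkA⟩ := hk ⟨A, hA⟩
    obtain ⟨kB, hOkB, hBkB, hfBkB⟩ := hk ⟨B, hB⟩
    obtain ⟨kC, hOkC, hCkC, hfCkC⟩ := hk ⟨C, hC⟩
    obtain ⟨kD, hOkD, hDkD, hfDkD⟩ := hk ⟨D, hD⟩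
    have hca : kC ≠ kA := fun e =>
      hOab (memE (uniqL (Ne.symm hCA) (memE e.symm hAkA) hCkC hA hC) hOkC)
    have hcb : kC ≠ kB := fun e =>
      hOab (memE (uniqL (Ne.symm hCB) (memE e.symm hBkB) hCkC hB hC) hOkC)
    have hpencil := line_to_pencil hdes h8 hCA hCB hA hB hC hD hharm hOab
      hOkA hAkA hOkB hBkB hOkC hCkC hOkD hDkD
    exact pencil_to_line hdes h8 hca hcb hOkA hOkB hOkC hOkD hpencil hOm
      (f ⟨A, hA⟩).2 hfAkA (f ⟨B, hB⟩).2 hfBkB (f ⟨C, hC⟩).2 hfCkC (f ⟨D, hD⟩).2 hfDkD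

/-- Projectivities preserve harmonic quadruples (by induction on the chain of
perspectivities). -/
theorem proj_step (hdes : DesarguesProperty P L) (h8 : LinesHaveAtLeast P L 8)
    {l m : L} {f : Rng P L l → Rng P L m} (hf : IsProjectivity P L l m f) :
    ∀ (A B C D : P) (hA : A ∈ l) (hB : B ∈ l) (hC : C ∈ l) (hD : D ∈ l),
      IsHarmonic P L A B C D →
      IsHarmonic P L ((f ⟨A, hA⟩ : P)) ((f ⟨B, hB⟩ : P)) ((f ⟨C, hC⟩ : P))
        ((f ⟨D, hD⟩ : P)) := by
  induction hf with
  | persp hp =>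
    intro A B C D hA hB hC hD hh
    exact persp_step hdes h8 hp hA hB hC hD hh
  | @comp l' m' n' f' g' hfp hgp ih1 ih2 =>
    intro A B C D hA hB hC hD hh
    exact ih2 _ _ _ _ (f' ⟨A, hA⟩).2 (f' ⟨B, hB⟩).2 (f' ⟨C, hC⟩).2 (f' ⟨D, hD⟩).2
      (ih1 A B C D hA hB hC hD hh)

end ProjHarm

/-- **A projectivity preserves harmonic conjugates.** Let `A ≠ B`, let `ab` be
the line `AB`, let `C` be a point on `ab`, and let `f` be a projectivity from
the range of `ab` to the range of a line `m`.  If `D = h(A,B;C)` then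
`f D = h(f A, f B; f C)`. -/
theorem projectivity_preserves_harmonic
    [Configuration.ProjectivePlane P L]
    (hdes : DesarguesProperty P L)
    (h8 : LinesHaveAtLeast P L 8)
    (A B : P) (hAB : A ≠ B) (ab : L) (hA : A ∈ ab) (hB : B ∈ ab)
    (C : P) (hC : C ∈ ab)
    (m : L) (f : Rng P L ab → Rng P L m)
    (hproj : IsProjectivity P L ab m f)
    (D : P) (hD : D ∈ ab) (hharm : IsHarmonic P L A B C D) :
    IsHarmonic P L ((f ⟨A, hA⟩ : P)) ((f ⟨B, hB⟩ : P)) ((f ⟨C, hC⟩ : P)) ((f ⟨D, hD⟩ : P)) :=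
  ProjHarm.proj_step hdes h8 hproj A B C D hA hB hC hD hharm
end

section
/- Axis of homology: Let π be a nonperspective projectivity from the range of a line l to the range of a distinct line m (nonperspective meaning π(X) ≠ X for every point X on l). Let O = l·m, V = π(O), U = π⁻¹(O); then U ≠ V, and the line h = UV is the axis of homology of π. If A and B are distinct points on l, each distinct from O, then the lines joining A to π(B) and joining B to π(A) are distinct, and their intersection point (A π(B))·(B π(A)) lies on the axis of homology h. -/
open Configuration

universe u
variable (P L : Type u) [Membership P L]

/-- The pencil of a point `U` : the lines incident with `U`. -/
abbrev Pcl (U : P) : Type _ := {k : L // U ∈ k}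

/-- `f` is the perspectivity from the pencil of `U` to the pencil of `V` with
axis `a`, a line avoiding both `U` and `V` : each line `k` through `U` is mapped
to the line joining `V` to `k·a`, i.e. `k`, `a` and `f k` are concurrent. -/
def IsPencilPerspectivity (U V : P) (f : Pcl P L U → Pcl P L V) : Prop :=
  ∃ a : L, U ∉ a ∧ V ∉ a ∧
    ∀ k : Pcl P L U, ∃ X : P, X ∈ (k : L) ∧ X ∈ a ∧ X ∈ ((f k : L))

/-- A projectivity between pencils of points : a composite of finitely many
perspectivities between pencils. -/
inductive IsPencilProjectivity : (U V : P) → (Pcl P L U → Pcl P L V) → Prop where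
  | persp {U V : P} {f : Pcl P L U → Pcl P L V} :
      IsPencilPerspectivity P L U V f → IsPencilProjectivity U V f
  | comp {U V W : P} {f : Pcl P L U → Pcl P L V} {g : Pcl P L V → Pcl P L W} :
      IsPencilProjectivity U V f → IsPencilProjectivity V W g →
      IsPencilProjectivity U W (g ∘ f)

/-- Axiom T: every projectivity of the range of a line (or of the pencil of
lines through a point) onto itself having three distinct fixed elements is the
identity. -/
def AxiomT : Prop :=
  (∀ (l : L) (f : Rng P L l → Rng P L l), IsProjectivity P L l l f →
    (∃ X Y Z : Rng P L l, X ≠ Y ∧ X ≠ Z ∧ Y ≠ Z ∧ f X = X ∧ f Y = Y ∧ f Z = Z) →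
    ∀ W, f W = W) ∧
  (∀ (U : P) (g : Pcl P L U → Pcl P L U), IsPencilProjectivity P L U U g →
    (∃ x y z : Pcl P L U, x ≠ y ∧ x ≠ z ∧ y ≠ z ∧ g x = x ∧ g y = y ∧ g z = z) →
    ∀ w, g w = w)

section Aux

variable {P L}
variable [Configuration.ProjectivePlane P L]

open Configuration.HasPoints (mkPoint mkPoint_ax)
open Configuration.HasLines (mkLine mkLine_ax)
open Configuration.Nondegenerate (eq_or_eq exists_point)

lemma line_eq_of {A B : P} (hAB : A ≠ B) {k k' : L} (h1 : A ∈ k) (h2 : B ∈ k)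
    (h3 : A ∈ k') (h4 : B ∈ k') : k = k' :=
  (eq_or_eq h1 h2 h3 h4).resolve_left hAB

lemma point_eq_of {k k' : L} (hkk : k ≠ k') {X Y : P} (h1 : X ∈ k) (h2 : Y ∈ k)
    (h3 : X ∈ k') (h4 : Y ∈ k') : X = Y :=
  (eq_or_eq h1 h2 h3 h4).resolve_right hkk

lemma proj_inj {n m : L} {g : Rng P L n → Rng P L m}
    (hg : IsProjectivity P L n m g) : Function.Injective g := by
  induction hg with
  | persp h =>
    obtain ⟨C, hCn, hCm, hcol⟩ := h
    rename_i n m g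
    intro X Y hXY
    obtain ⟨c, hCc, hXc, hgXc⟩ := hcol X
    obtain ⟨c', hCc', hYc', hgYc'⟩ := hcol Y
    rw [hXY] at hgXc
    have hCgY : C ≠ ((g Y : P)) := fun e => hCm (e ▸ (g Y).2)
    have hcc' : c = c' := line_eq_of hCgY hCc hgXc hCc' hgYc'
    by_contra hne
    have hXY' : (X : P) ≠ (Y : P) := fun e => hne (Subtype.ext e)
    have hcn : c = n := line_eq_of hXY' hXc (hcc' ▸ hYc') X.2 Y.2
    exact hCn (hcn ▸ hCc)
  | comp h1 h2 ih1 ih2 => exact ih2.comp ih1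

/-- Elementary pencil perspectivity with axis `a`. -/
noncomputable def eersp (U V : P) (a : L) (hU : U ∉ a) (hV : V ∉ a) :
    Pcl P L U → Pcl P L V := fun k =>
  have hka : (k : L) ≠ a := fun e => hU (e ▸ k.2)
  have hVX : V ≠ mkPoint hka := fun e => hV (e ▸ (mkPoint_ax hka).2)
  ⟨mkLine hVX, (mkLine_ax hVX).1⟩

lemma eersp_spec (U V : P) (a : L) (hU : U ∉ a) (hV : V ∉ a) (k : Pcl P L U) :
    ∃ X : P, X ∈ (k : L) ∧ X ∈ a ∧ V ∈ ((eersp U V a hU hV k) : L) ∧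
      X ∈ ((eersp U V a hU hV k) : L) := by
  dsimp only [eersp]
  exact ⟨mkPoint _, (mkPoint_ax _).1, (mkPoint_ax _).2, (mkLine_ax _).1, (mkLine_ax _).2⟩

lemma eersp_isPersp (U V : P) (a : L) (hU : U ∉ a) (hV : V ∉ a) :
    IsPencilPerspectivity P L U V (eersp U V a hU hV) := by
  refine ⟨a, hU, hV, fun k => ?_⟩
  obtain ⟨X, h1, h2, _, h4⟩ := eersp_spec U V a hU hV k
  exact ⟨X, h1, h2, h4⟩

/-- The pencil map induced by a map between ranges. -/
noncomputable def penmap (n m : L) (g : Rng P L n → Rng P L m) (Q R : P)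
    (hQ : Q ∉ n) (hR : R ∉ m) : Pcl P L Q → Pcl P L R := fun k =>
  have hkn : (k : L) ≠ n := fun e => hQ (e ▸ k.2)
  have hRX : R ≠ ((g ⟨mkPoint hkn, (mkPoint_ax hkn).2⟩ : P)) :=
    fun e => hR (e ▸ (g ⟨mkPoint hkn, (mkPoint_ax hkn).2⟩).2)
  ⟨mkLine hRX, (mkLine_ax hRX).1⟩

lemma penmap_spec (n m : L) (g : Rng P L n → Rng P L m) (Q R : P)
    (hQ : Q ∉ n) (hR : R ∉ m) (k : Pcl P L Q) :
    ∃ X : Rng P L n, (X : P) ∈ (k : L) ∧ R ∈ ((penmap n m g Q R hQ hR k) : L) ∧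
      ((g X : P)) ∈ ((penmap n m g Q R hQ hR k) : L) := by
  dsimp only [penmap]
  exact ⟨_, (mkPoint_ax _).1, (mkLine_ax _).1, (mkLine_ax _).2⟩

lemma penmap_isProj {n m : L} {g : Rng P L n → Rng P L m}
    (hg : IsProjectivity P L n m g) (Q R : P) (hQ : Q ∉ n) (hR : R ∉ m) :
    IsPencilProjectivity P L Q R (penmap n m g Q R hQ hR) := by
  induction hg generalizing Q R with
  | persp h =>
    rename_i n m g
    obtain ⟨C, hCn, hCm, hcol⟩ := h
    have heq : penmap n m g Q R hQ hR = (eersp C R m hCm hR) ∘ (eersp Q C n hQ hCn) := by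
      funext k
      apply Subtype.ext
      obtain ⟨X, hXk, hR1, hgX1⟩ := penmap_spec n m g Q R hQ hR k
      obtain ⟨Y, hYk, hYn, hC2, hY2⟩ := eersp_spec Q C n hQ hCn k
      set j1 := eersp Q C n hQ hCn k with hj1
      have hkn : (k : L) ≠ n := fun e => hQ (e ▸ k.2)
      have hYX : Y = (X : P) := point_eq_of hkn hYk hXk hYn X.2
      obtain ⟨c, hCc, hXc, hgXc⟩ := hcol X
      have hCX : C ≠ (X : P) := fun e => hCn (e ▸ X.2)
      have hXj1 : (X : P) ∈ (j1 : L) := hYX ▸ hY2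
      have hcj1 : c = (j1 : L) := line_eq_of hCX hCc hXc hC2 hXj1
      have hgXj1 : ((g X : P)) ∈ (j1 : L) := hcj1 ▸ hgXc
      obtain ⟨Z, hZj1, hZm, hR3, hZ3⟩ := eersp_spec C R m hCm hR j1
      have hj1m : (j1 : L) ≠ m := fun e => hCm (e ▸ j1.2)
      have hZgX : Z = ((g X : P)) := point_eq_of hj1m hZj1 hgXj1 hZm (g X).2
      have hRgX : R ≠ ((g X : P)) := fun e => hR (e ▸ (g X).2)
      exact line_eq_of hRgX hR1 hgX1 hR3 (hZgX ▸ hZ3)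
    rw [heq]
    exact IsPencilProjectivity.comp
      (IsPencilProjectivity.persp (eersp_isPersp Q C n hQ hCn))
      (IsPencilProjectivity.persp (eersp_isPersp C R m hCm hR))
  | comp h1 h2 ih1 ih2 =>
    rename_i n p m g1 g2
    obtain ⟨S, hSp⟩ := exists_point (P := P) p
    have heq : penmap n m (g2 ∘ g1) Q R hQ hR =
        (penmap p m g2 S R hSp hR) ∘ (penmap n p g1 Q S hQ hSp) := by
      funext k
      apply Subtype.ext
      obtain ⟨X, hXk, hR1, hgX1⟩ := penmap_spec n m (g2 ∘ g1) Q R hQ hR k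
      obtain ⟨X', hX'k, hS2, hg2⟩ := penmap_spec n p g1 Q S hQ hSp k
      set j1 := penmap n p g1 Q S hQ hSp k with hj1
      have hkn : (k : L) ≠ n := fun e => hQ (e ▸ k.2)
      have hXX' : X = X' := Subtype.ext (point_eq_of hkn hXk hX'k X.2 X'.2)
      obtain ⟨Y, hYj1, hR3, hg3⟩ := penmap_spec p m g2 S R hSp hR j1
      have hj1p : (j1 : L) ≠ p := fun e => hSp (e ▸ j1.2)
      have hYg1 : Y = g1 X' := Subtype.ext (point_eq_of hj1p hYj1 hg2 Y.2 (g1 X').2)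
      have hRg : R ≠ ((g2 (g1 X) : P)) := fun e => hR (e ▸ (g2 (g1 X)).2)
      refine line_eq_of hRg hR1 hgX1 hR3 ?_
      rw [hXX', ← hYg1]
      exact hg3
    rw [heq]
    exact IsPencilProjectivity.comp (ih1 Q S hQ hSp) (ih2 S R hSp hR)

end Aux

/-- **Axis of homology.** Let `f` be a nonperspective projectivity from the
range of a line `l` to the range of a distinct line `m` (`f X ≠ X` for every
point `X` of `l`).  Let `O = l·m`, `V = f O`, and let `U` be the point of `l`
with `f U = O`.  Then `U ≠ V` (so that `h = UV`, the axis of homology, is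
defined), and for all distinct points `A`, `B` of `l`, each distinct from `O`,
the joins `A(f B)` and `B(f A)` are defined and distinct, and their
intersection point lies on the axis `h = UV`. -/
theorem axis_of_homology
    [Configuration.ProjectivePlane P L]
    (h6 : LinesHaveAtLeast P L 6) (hT : AxiomT P L)
    (l m : L) (hlm : l ≠ m)
    (f : Rng P L l → Rng P L m) (hproj : IsProjectivity P L l m f)
    (hnonpersp : ∀ X : Rng P L l, ((f X : P)) ≠ (X : P))
    (O : P) (hOl : O ∈ l) (hOm : O ∈ m)
    (U : Rng P L l) (hU : f U = ⟨O, hOm⟩) :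
    (U : P) ≠ ((f ⟨O, hOl⟩ : P)) ∧
    ∀ A B : Rng P L l, (A : P) ≠ (B : P) → (A : P) ≠ O → (B : P) ≠ O →
      (A : P) ≠ ((f B : P)) ∧ (B : P) ≠ ((f A : P)) ∧
      ∀ k k' : L, (A : P) ∈ k → ((f B : P)) ∈ k → (B : P) ∈ k' → ((f A : P)) ∈ k' →
        k ≠ k' ∧
        ∀ X : P, X ∈ k → X ∈ k' → Col P L (U : P) ((f ⟨O, hOl⟩ : P)) X := by
  classical
  obtain ⟨hT1, hT2⟩ := hT
  have hinj : Function.Injective f := proj_inj hproj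
  set Vr := f ⟨O, hOl⟩ with hVr
  have hUO : (U : P) ≠ O := by
    intro e
    apply hnonpersp U
    rw [hU, e]
  have hVO : (Vr : P) ≠ O := hnonpersp ⟨O, hOl⟩
  have hUV : (U : P) ≠ (Vr : P) := by
    intro e
    exact hUO (point_eq_of hlm U.2 hOl (e ▸ Vr.2) hOm)
  have hUm : (U : P) ∉ m := fun hm => hUO (point_eq_of hlm U.2 hOl hm hOm)
  have hVl : (Vr : P) ∉ l := fun hl => hVO (point_eq_of hlm hl hOl Vr.2 hOm)
  refine ⟨hUV, ?_⟩
  set hline := Configuration.HasLines.mkLine (P := P) (L := L) hUV with hhl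
  have hUh : (U : P) ∈ hline := (Configuration.HasLines.mkLine_ax (P := P) (L := L) hUV).1
  have hVh : (Vr : P) ∈ hline := (Configuration.HasLines.mkLine_ax (P := P) (L := L) hUV).2
  have hlh : l ≠ hline := fun e => hVl (by rw [e]; exact hVh)
  have hmh : m ≠ hline := fun e => hUm (by rw [e]; exact hUh)
  have key : ∀ A B : Rng P L l, (A : P) ≠ (B : P) → (A : P) ≠ O → (B : P) ≠ O →
      (A : P) ≠ (U : P) →
      ∀ k k' : L, (A : P) ∈ k → ((f B : P)) ∈ k → (B : P) ∈ k' → ((f A : P)) ∈ k' →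
      k ≠ k' → ∀ X : P, X ∈ k → X ∈ k' → X ∈ hline := by
    intro A B hAB hAO hBO hAU k k' hAk hfBk hBk' hfAk' hkk' X hXk hXk'
    set A' := f A with hA'def
    have hAm : (A : P) ∉ m := fun hm => hAO (point_eq_of hlm A.2 hOl hm hOm)
    have hA'l : (A' : P) ∉ l := by
      intro hl
      have h1 : (A' : P) = O := point_eq_of hlm hl hOl A'.2 hOm
      have h2 : f A = f U := by
        apply Subtype.ext
        rw [hU]
        exact h1
      exact hAU (congrArg Subtype.val (hinj h2))
    have hAA' : (A : P) ≠ (A' : P) := fun e => hAm (by rw [e]; exact A'.2)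
    have hA'V : (A' : P) ≠ (Vr : P) := by
      intro e
      have h1 : A = ⟨O, hOl⟩ := hinj (Subtype.ext e)
      apply hAO
      rw [h1]
    have hAh : (A : P) ∉ hline := fun h => hlh (line_eq_of hAU A.2 U.2 h hUh)
    have hA'h : (A' : P) ∉ hline := fun h => hmh (line_eq_of hA'V A'.2 Vr.2 h hVh)
    set σ := penmap l m f (A' : P) (A : P) hA'l hAm with hσdef
    set τ := eersp (A : P) (A' : P) hline hAh hA'h with hτdef
    have hgproj : IsPencilProjectivity P L (A' : P) (A' : P) (τ ∘ σ) :=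
      IsPencilProjectivity.comp (penmap_isProj hproj _ _ hA'l hAm)
        (IsPencilProjectivity.persp (eersp_isPersp _ _ _ hAh hA'h))
    have σ_eval : ∀ (k₀ : Pcl P L (A' : P)) (Xd : Rng P L l), (Xd : P) ∈ (k₀ : L) →
        (A : P) ∈ (σ k₀ : L) ∧ ((f Xd : P)) ∈ (σ k₀ : L) := by
      intro k₀ Xd hXd
      obtain ⟨X1, hX1k, hA1, hf1⟩ := penmap_spec l m f (A' : P) (A : P) hA'l hAm k₀
      have hk₀l : (k₀ : L) ≠ l := fun e => hA'l (by rw [← e]; exact k₀.2)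
      have hX1Xd : X1 = Xd := Subtype.ext (point_eq_of hk₀l hX1k hXd X1.2 Xd.2)
      rw [hX1Xd] at hf1
      exact ⟨hA1, hf1⟩
    have τ_eval : ∀ (j : Pcl P L (A : P)) (Z : P), Z ∈ (j : L) → Z ∈ hline →
        (A' : P) ∈ (τ j : L) ∧ Z ∈ (τ j : L) := by
      intro j Z hZj hZh
      obtain ⟨Y, hYj, hYh, hA'3, hY3⟩ := eersp_spec (A : P) (A' : P) hline hAh hA'h j
      have hjh : (j : L) ≠ hline := fun e => hAh (by rw [← e]; exact j.2)
      have hYZ : Y = Z := point_eq_of hjh hYj hZj hYh hZh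
      rw [hYZ] at hY3
      exact ⟨hA'3, hY3⟩
    have hA'U : (A' : P) ≠ (U : P) := fun e => hUm (by rw [← e]; exact A'.2)
    have hA'B : (A' : P) ≠ (B : P) := fun e => hA'l (by rw [e]; exact B.2)
    have hA'A : (A' : P) ≠ (A : P) := hAA'.symm
    set p₁ : Pcl P L (A' : P) :=
      ⟨Configuration.HasLines.mkLine (P := P) (L := L) hA'U, (Configuration.HasLines.mkLine_ax (P := P) (L := L) hA'U).1⟩ with hp₁
    set p₂ : Pcl P L (A' : P) := ⟨m, A'.2⟩ with hp₂
    set p₃ : Pcl P L (A' : P) :=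
      ⟨Configuration.HasLines.mkLine (P := P) (L := L) hA'A, (Configuration.HasLines.mkLine_ax (P := P) (L := L) hA'A).1⟩ with hp₃
    have fix1 : (τ ∘ σ) p₁ = p₁ := by
      obtain ⟨hA1, hf1⟩ := σ_eval p₁ U (Configuration.HasLines.mkLine_ax (P := P) (L := L) hA'U).2
      rw [hU] at hf1
      have hσl : (σ p₁ : L) = l := line_eq_of hAO A.2 hOl hA1 hf1 |>.symm
      obtain ⟨hA'2, hU2⟩ := τ_eval (σ p₁) (U : P) (by rw [hσl]; exact U.2) hUh
      apply Subtype.ext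
      exact line_eq_of hA'U hA'2 hU2 (Configuration.HasLines.mkLine_ax (P := P) (L := L) hA'U).1
        (Configuration.HasLines.mkLine_ax (P := P) (L := L) hA'U).2
    have fix2 : (τ ∘ σ) p₂ = p₂ := by
      obtain ⟨hA1, hf1⟩ := σ_eval p₂ ⟨O, hOl⟩ hOm
      obtain ⟨hA'2, hV2⟩ := τ_eval (σ p₂) (Vr : P) hf1 hVh
      apply Subtype.ext
      exact line_eq_of hA'V hA'2 hV2 A'.2 Vr.2
    have fix3 : (τ ∘ σ) p₃ = p₃ := by
      obtain ⟨hA1, hf1⟩ := σ_eval p₃ A (Configuration.HasLines.mkLine_ax (P := P) (L := L) hA'A).2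
      have hσp : (σ p₃ : L) = (p₃ : L) := line_eq_of hAA' hA1 hf1
        (Configuration.HasLines.mkLine_ax (P := P) (L := L) hA'A).2 (Configuration.HasLines.mkLine_ax (P := P) (L := L) hA'A).1
      have hp₃h : (p₃ : L) ≠ hline := fun e => hA'h (by rw [← e]; exact p₃.2)
      set Z := Configuration.HasPoints.mkPoint (P := P) (L := L) hp₃h with hZ
      obtain ⟨hA'2, hZ2⟩ := τ_eval (σ p₃) Z
        (by rw [hσp]; exact (Configuration.HasPoints.mkPoint_ax (P := P) (L := L) hp₃h).1)
        (Configuration.HasPoints.mkPoint_ax (P := P) (L := L) hp₃h).2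
      have hA'Z : (A' : P) ≠ Z := fun e =>
        hA'h (by rw [e]; exact (Configuration.HasPoints.mkPoint_ax (P := P) (L := L) hp₃h).2)
      apply Subtype.ext
      exact line_eq_of hA'Z hA'2 hZ2 p₃.2 (Configuration.HasPoints.mkPoint_ax (P := P) (L := L) hp₃h).1
    have d12 : p₁ ≠ p₂ := by
      intro e
      apply hUm
      have h1 : (p₁ : L) = m := congrArg Subtype.val e
      rw [← h1]
      exact (Configuration.HasLines.mkLine_ax (P := P) (L := L) hA'U).2
    have d13 : p₁ ≠ p₃ := by
      intro e
      apply hA'l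
      have h1 : (p₁ : L) = (p₃ : L) := congrArg Subtype.val e
      have hAp₁ : (A : P) ∈ (p₁ : L) := by
        rw [h1]; exact (Configuration.HasLines.mkLine_ax (P := P) (L := L) hA'A).2
      have h2 : (p₁ : L) = l := line_eq_of hAU hAp₁
        (Configuration.HasLines.mkLine_ax (P := P) (L := L) hA'U).2 A.2 U.2
      rw [← h2]
      exact (Configuration.HasLines.mkLine_ax (P := P) (L := L) hA'U).1
    have d23 : p₂ ≠ p₃ := by
      intro e
      apply hAm
      have h1 : m = (p₃ : L) := congrArg Subtype.val e
      rw [h1]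
      exact (Configuration.HasLines.mkLine_ax (P := P) (L := L) hA'A).2
    have hid := hT2 (A' : P) (τ ∘ σ) hgproj ⟨p₁, p₂, p₃, d12, d13, d23, fix1, fix2, fix3⟩
    set k₀ : Pcl P L (A' : P) :=
      ⟨Configuration.HasLines.mkLine (P := P) (L := L) hA'B, (Configuration.HasLines.mkLine_ax (P := P) (L := L) hA'B).1⟩ with hk₀
    obtain ⟨hA1, hfB1⟩ := σ_eval k₀ B (Configuration.HasLines.mkLine_ax (P := P) (L := L) hA'B).2
    have hAfB : (A : P) ≠ ((f B : P)) := fun e => hAm (by rw [e]; exact (f B).2)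
    have hσk : (σ k₀ : L) = k := line_eq_of hAfB hA1 hfB1 hAk hfBk
    have hσh : (σ k₀ : L) ≠ hline := fun e => hAh (by rw [← e]; exact hA1)
    set Y := Configuration.HasPoints.mkPoint (P := P) (L := L) hσh with hY
    obtain ⟨hA'2, hY2⟩ := τ_eval (σ k₀) Y (Configuration.HasPoints.mkPoint_ax (P := P) (L := L) hσh).1
      (Configuration.HasPoints.mkPoint_ax (P := P) (L := L) hσh).2
    have hτk : τ (σ k₀) = k₀ := hid k₀
    have hYk₀ : Y ∈ (k₀ : L) := by
      have := congrArg Subtype.val hτk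
      rw [← this]
      exact hY2
    have hk'eq : (k₀ : L) = k' := line_eq_of hA'B
      (Configuration.HasLines.mkLine_ax (P := P) (L := L) hA'B).1 (Configuration.HasLines.mkLine_ax (P := P) (L := L) hA'B).2
      hfAk' hBk'
    have hXY : X = Y := point_eq_of hkk' hXk
      (by rw [← hσk]; exact (Configuration.HasPoints.mkPoint_ax (P := P) (L := L) hσh).1) hXk'
      (by rw [← hk'eq]; exact hYk₀)
    rw [hXY]
    exact (Configuration.HasPoints.mkPoint_ax (P := P) (L := L) hσh).2
  intro A B hAB hAO hBO
  have hAfB : (A : P) ≠ ((f B : P)) := by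
    intro e
    exact hAO (point_eq_of hlm A.2 hOl (e ▸ (f B).2) hOm)
  have hBfA : (B : P) ≠ ((f A : P)) := by
    intro e
    exact hBO (point_eq_of hlm B.2 hOl (e ▸ (f A).2) hOm)
  refine ⟨hAfB, hBfA, ?_⟩
  intro k k' hAk hfBk hBk' hfAk'
  have hkk' : k ≠ k' := by
    intro e
    subst e
    have hkl : k = l := line_eq_of hAB hAk hBk' A.2 B.2
    have h1 : (f B : P) = O := point_eq_of hlm (hkl ▸ hfBk) hOl (f B).2 hOm
    have h2 : (f A : P) = O := point_eq_of hlm (hkl ▸ hfAk') hOl (f A).2 hOm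
    have h3 : f A = f B := Subtype.ext (h2.trans h1.symm)
    exact hAB (congrArg Subtype.val (hinj h3))
  refine ⟨hkk', ?_⟩
  intro X hXk hXk'
  by_cases hAU : (A : P) = (U : P)
  · have hBU : (B : P) ≠ (U : P) := fun e => hAB (hAU.trans e.symm)
    exact ⟨hline, hUh, hVh, key B A hAB.symm hBO hAO hBU k' k hBk' hfAk' hAk hfBk hkk'.symm X hXk' hXk⟩
  · exact ⟨hline, hUh, hVh, key A B hAB hAO hBO hAU k k' hAk hfBk hBk' hfAk' hkk' X hXk hXk'⟩
end

section
/- A projectivity between distinct ranges with a fixed point is a perspectivity: Let π be a projectivity from the range of a line l to the range of a distinct line m, and suppose the common point l·m is fixed by π. Then π is a perspectivity: there exists a point O outside both l and m such that π(X) = (OX)·m for every point X on l. -/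
open Configuration

universe u
variable (P L : Type u) [Membership P L]

section Aux

variable {P L : Type u} [Membership P L] [Configuration.ProjectivePlane P L]

/-- Two points on two distinct lines coincide. -/
lemma aux_point_unique {p q : P} {l₁ l₂ : L} (h : l₁ ≠ l₂)
    (hp1 : p ∈ l₁) (hp2 : p ∈ l₂) (hq1 : q ∈ l₁) (hq2 : q ∈ l₂) : p = q :=
  (Configuration.Nondegenerate.eq_or_eq hp1 hq1 hp2 hq2).resolve_right h

/-- Two lines through two distinct points coincide. -/
lemma aux_line_unique {p q : P} {l₁ l₂ : L} (h : p ≠ q)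
    (hp1 : p ∈ l₁) (hq1 : q ∈ l₁) (hp2 : p ∈ l₂) (hq2 : q ∈ l₂) : l₁ = l₂ :=
  (Configuration.Nondegenerate.eq_or_eq hp1 hq1 hp2 hq2).resolve_left h

lemma aux_persp_inj {l m : L} {f : Rng P L l → Rng P L m}
    (hf : IsPerspectivity P L l m f) : Function.Injective f := by
  obtain ⟨C, hCl, hCm, hC⟩ := hf
  intro X Y hXY
  by_contra hne
  obtain ⟨k₁, hCk₁, hXk₁, hfXk₁⟩ := hC X
  obtain ⟨k₂, hCk₂, hYk₂, hfYk₂⟩ := hC Y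
  have hXYne : (X : P) ≠ (Y : P) := fun h => hne (Subtype.ext h)
  have hk12 : k₁ ≠ k₂ := by
    intro h
    subst h
    exact hCl (aux_line_unique hXYne hXk₁ hYk₂ X.2 Y.2 ▸ hCk₁)
  have hfXk₂ : (f X : P) ∈ k₂ := by rw [hXY]; exact hfYk₂
  have : C = (f X : P) := aux_point_unique hk12 hCk₁ hCk₂ hfXk₁ hfXk₂
  exact hCm (this ▸ (f X).2)

lemma aux_proj_inj {l m : L} {f : Rng P L l → Rng P L m}
    (hf : IsProjectivity P L l m f) : Function.Injective f := by
  induction hf with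
  | persp h => exact aux_persp_inj h
  | comp h1 h2 ih1 ih2 => exact ih2.comp ih1

end Aux

/-- **A projectivity between distinct ranges with a fixed point is a
perspectivity.** Let `f` be a projectivity from the range of a line `l` to the
range of a distinct line `m`, and suppose the common point `O = l·m` is fixed
by `f`.  Then `f` is a perspectivity: there is a point outside both `l` and `m`
from which `f` is the projection of `l` onto `m`. -/
theorem projectivity_with_fixed_point_is_perspectivity
    [Configuration.ProjectivePlane P L]
    (h6 : LinesHaveAtLeast P L 6) (hT : AxiomT P L)
    (l m : L) (hlm : l ≠ m)
    (f : Rng P L l → Rng P L m) (hproj : IsProjectivity P L l m f)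
    (O : P) (hOl : O ∈ l) (hOm : O ∈ m)
    (hfix : f ⟨O, hOl⟩ = ⟨O, hOm⟩) :
    IsPerspectivity P L l m f := by
  classical
  have finj : Function.Injective f := aux_proj_inj hproj
  -- pick two points A B on l distinct from O and from each other
  obtain ⟨s, hs6, hsl⟩ := h6 l
  have hcard : 1 < (s.erase O).card := by
    have := Finset.pred_card_le_card_erase (a := O) (s := s)
    omega
  obtain ⟨A, hAs, B, hBs, hAB⟩ := Finset.one_lt_card.mp hcard
  have hAl : A ∈ l := hsl A (Finset.mem_of_mem_erase hAs)
  have hBl : B ∈ l := hsl B (Finset.mem_of_mem_erase hBs)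
  have hAO : A ≠ O := Finset.ne_of_mem_erase hAs
  have hBO : B ≠ O := Finset.ne_of_mem_erase hBs
  have hAm : A ∉ m := fun h => hAO (aux_point_unique hlm hAl h hOl hOm)
  have hBm : B ∉ m := fun h => hBO (aux_point_unique hlm hBl h hOl hOm)
  set A' : P := (f ⟨A, hAl⟩ : P) with hA'def
  set B' : P := (f ⟨B, hBl⟩ : P) with hB'def
  have hA'm : A' ∈ m := (f ⟨A, hAl⟩).2
  have hB'm : B' ∈ m := (f ⟨B, hBl⟩).2
  have hA'O : A' ≠ O := by
    intro h
    exact hAO (congrArg Subtype.val (finj (a₁ := ⟨A, hAl⟩) (a₂ := ⟨O, hOl⟩)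
      (by rw [hfix]; exact Subtype.ext h)))
  have hB'O : B' ≠ O := by
    intro h
    exact hBO (congrArg Subtype.val (finj (a₁ := ⟨B, hBl⟩) (a₂ := ⟨O, hOl⟩)
      (by rw [hfix]; exact Subtype.ext h)))
  have hA'B' : A' ≠ B' := by
    intro h
    exact hAB (congrArg Subtype.val (finj (a₁ := ⟨A, hAl⟩) (a₂ := ⟨B, hBl⟩)
      (Subtype.ext h)))
  have hA'l : A' ∉ l := fun h => hA'O (aux_point_unique hlm.symm hA'm h hOm hOl)
  have hB'l : B' ∉ l := fun h => hB'O (aux_point_unique hlm.symm hB'm h hOm hOl)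
  have hAA' : A ≠ A' := fun h => hAm (h ▸ hA'm)
  have hBB' : B ≠ B' := fun h => hBm (h ▸ hB'm)
  set a : L := Configuration.HasLines.mkLine hAA' with hadef
  set b : L := Configuration.HasLines.mkLine hBB' with hbdef
  have hAa : A ∈ a := (Configuration.HasLines.mkLine_ax hAA').1
  have hA'a : A' ∈ a := (Configuration.HasLines.mkLine_ax hAA').2
  have hBb : B ∈ b := (Configuration.HasLines.mkLine_ax hBB').1
  have hB'b : B' ∈ b := (Configuration.HasLines.mkLine_ax hBB').2
  have hal : a ≠ l := fun h => hA'l (h ▸ hA'a)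
  have ham : a ≠ m := fun h => hAm (h ▸ hAa)
  have hbl : b ≠ l := fun h => hB'l (h ▸ hB'b)
  have hbm : b ≠ m := fun h => hBm (h ▸ hBb)
  have hab : a ≠ b := by
    intro h
    have : a = l := aux_line_unique hAB hAa (h ▸ hBb) hAl hBl
    exact hal this
  -- the center S
  set S : P := Configuration.HasPoints.mkPoint hab with hSdef
  have hSa : S ∈ a := (Configuration.HasPoints.mkPoint_ax hab).1
  have hSb : S ∈ b := (Configuration.HasPoints.mkPoint_ax hab).2
  have hSl : S ∉ l := by
    intro hS
    have h1 : S = A := (Configuration.Nondegenerate.eq_or_eq hSa hAa hS hAl).resolve_right hal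
    have h2 : S = B := (Configuration.Nondegenerate.eq_or_eq hSb hBb hS hBl).resolve_right hbl
    exact hAB (h1 ▸ h2)
  have hSm : S ∉ m := by
    intro hS
    have h1 : S = A' := (Configuration.Nondegenerate.eq_or_eq hSa hA'a hS hA'm).resolve_right ham
    have h2 : S = B' := (Configuration.Nondegenerate.eq_or_eq hSb hB'b hS hB'm).resolve_right hbm
    exact hA'B' (h1 ▸ h2)
  -- the inverse perspectivity g' : Rng m → Rng l  with center S
  have hSne : ∀ X : Rng P L m, S ≠ (X : P) := fun X hx => hSm (hx ▸ X.2)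
  have hkl : ∀ X : Rng P L m, Configuration.HasLines.mkLine (hSne X) ≠ l :=
    fun X h => hSl (h ▸ (Configuration.HasLines.mkLine_ax (hSne X)).1)
  set g' : Rng P L m → Rng P L l := fun X =>
    ⟨Configuration.HasPoints.mkPoint (hkl X),
     (Configuration.HasPoints.mkPoint_ax (hkl X)).2⟩ with hg'def
  have hg'persp : IsPerspectivity P L m l g' := by
    refine ⟨S, hSm, hSl, fun X => ⟨Configuration.HasLines.mkLine (hSne X),
      (Configuration.HasLines.mkLine_ax (hSne X)).1,
      (Configuration.HasLines.mkLine_ax (hSne X)).2,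
      (Configuration.HasPoints.mkPoint_ax (hkl X)).1⟩⟩
  -- key computation: if X lies on the line S-(f X), then g' (f X) = X
  have hkey : ∀ X : Rng P L l, (X : P) ∈ (Configuration.HasLines.mkLine (hSne (f X)) : L) →
      g' (f X) = X := by
    intro X hX
    apply Subtype.ext
    exact aux_point_unique (hkl (f X)) (Configuration.HasPoints.mkPoint_ax (hkl (f X))).1
      (Configuration.HasPoints.mkPoint_ax (hkl (f X))).2 hX X.2
  -- three fixed points of g' ∘ f
  have hfixO : (g' ∘ f) ⟨O, hOl⟩ = ⟨O, hOl⟩ := by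
    show g' (f ⟨O, hOl⟩) = ⟨O, hOl⟩
    rw [hfix]
    apply Subtype.ext
    exact aux_point_unique (hkl ⟨O, hOm⟩)
      (Configuration.HasPoints.mkPoint_ax (hkl ⟨O, hOm⟩)).1
      (Configuration.HasPoints.mkPoint_ax (hkl ⟨O, hOm⟩)).2
      (Configuration.HasLines.mkLine_ax (hSne ⟨O, hOm⟩)).2 hOl
  have hlineA : Configuration.HasLines.mkLine (hSne (f ⟨A, hAl⟩)) = a := by
    have hSA' : S ≠ A' := hSne (f ⟨A, hAl⟩)
    exact aux_line_unique hSA'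
      (Configuration.HasLines.mkLine_ax hSA').1
      (Configuration.HasLines.mkLine_ax hSA').2 hSa hA'a
  have hlineB : Configuration.HasLines.mkLine (hSne (f ⟨B, hBl⟩)) = b := by
    have hSB' : S ≠ B' := hSne (f ⟨B, hBl⟩)
    exact aux_line_unique hSB'
      (Configuration.HasLines.mkLine_ax hSB').1
      (Configuration.HasLines.mkLine_ax hSB').2 hSb hB'b
  have hfixA : (g' ∘ f) ⟨A, hAl⟩ = ⟨A, hAl⟩ := hkey _ (hlineA ▸ hAa)
  have hfixB : (g' ∘ f) ⟨B, hBl⟩ = ⟨B, hBl⟩ := hkey _ (hlineB ▸ hBb)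
  -- Axiom T: g' ∘ f is the identity
  have hid : ∀ W, (g' ∘ f) W = W := by
    refine hT.1 l (g' ∘ f) (IsProjectivity.comp hproj (IsProjectivity.persp hg'persp))
      ⟨⟨O, hOl⟩, ⟨A, hAl⟩, ⟨B, hBl⟩, ?_, ?_, ?_, hfixO, hfixA, hfixB⟩
    · exact fun h => hAO (congrArg Subtype.val h).symm
    · exact fun h => hBO (congrArg Subtype.val h).symm
    · exact fun h => hAB (congrArg Subtype.val h)
  -- conclude: f is the perspectivity with center S
  refine ⟨S, hSl, hSm, fun X => ⟨Configuration.HasLines.mkLine (hSne (f X)),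
    (Configuration.HasLines.mkLine_ax (hSne (f X))).1, ?_,
    (Configuration.HasLines.mkLine_ax (hSne (f X))).2⟩⟩
  have := hid X
  have hXval : (X : P) = Configuration.HasPoints.mkPoint (hkl (f X)) :=
    (congrArg Subtype.val this).symm
  exact hXval ▸ (Configuration.HasPoints.mkPoint_ax (hkl (f X))).1
end
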